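/- arXiv:0804.4679 — 9 statements merged into one kernel-verified Lean document; each statement's English description precedes it below -/
import Mathlib

section
/- Let G, A, B be groups, with B acting on a finite set 𝓑, and let φ : G → B be a group homomorphism such that the induced action of G on 𝓑 (via φ) is transitive. Fix b ∈ 𝓑 and let S = φ⁻¹(Stab_B(b)) ≤ G. Then the map Ψ sending a homomorphism ρ : G → A ≀ B with π ∘ ρ = φ to the homomorphism ρ_b : S → A (defined by ρ_b(s) = f_s(b) where ρ(s) = (f_s, φ(s))) is surjective onto the set of all group homomorphisms S → A, and every fiber of Ψ has cardinality |A|^(|𝓑| − 1) (assuming A is finite). -/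
/-- The automorphism action of `B` on functions `𝓑 → A`, given by
`(b • f) j = f (b⁻¹ • j)`. -/
def wreathAut (A B 𝓑 : Type*) [Group A] [Group B] [MulAction B 𝓑] :
    B →* MulAut (𝓑 → A) where
  toFun b :=
    { toFun := fun f j => f (b⁻¹ • j)
      invFun := fun f j => f (b • j)
      left_inv := fun f => by funext j; simp
      right_inv := fun f => by funext j; simp
      map_mul' := fun f g => rfl }
  map_one' := by ext f j; simp
  map_mul' b₁ b₂ := by ext f j; simp [mul_smul]

/-- The wreath product `A ≀ B`, with `B` acting on the finite set `𝓑`: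
the semidirect product `(𝓑 → A) ⋊ B`. -/
abbrev WreathProduct (A B 𝓑 : Type*) [Group A] [Group B] [MulAction B 𝓑] : Type _ :=
  SemidirectProduct (𝓑 → A) B (wreathAut A B 𝓑)

section Aux

variable {G A B 𝓑 : Type*} [Group G] [Group A] [Group B] [MulAction B 𝓑]

lemma wreathAut_apply (c : B) (f : 𝓑 → A) (j : 𝓑) :
    wreathAut A B 𝓑 c f j = f (c⁻¹ • j) := rfl

variable (φ : G →* B) (b : 𝓑) (t : 𝓑 → G)

lemma wreath_elt_mem (ht : ∀ j, φ (t j) • b = j) (g : G) (j : 𝓑) :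
    (t j)⁻¹ * g * t ((φ g)⁻¹ • j) ∈ (MulAction.stabilizer B b).comap φ := by
  have h1 : φ g • ((φ g)⁻¹ • j) = j := smul_inv_smul _ _
  have h2 : (φ (t j))⁻¹ • j = b := inv_smul_eq_iff.mpr (ht j).symm
  simp only [Subgroup.mem_comap, MulAction.mem_stabilizer_iff, map_mul, map_inv, mul_smul,
    ht, h1, h2]

/-- For `j ∈ 𝓑` and `g ∈ G`, the element `t_j⁻¹ g t_{φ(g)⁻¹ • j}` of `S`. -/
def wreathElt (ht : ∀ j, φ (t j) • b = j) (g : G) (j : 𝓑) : ↥((MulAction.stabilizer B b).comap φ) :=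
  ⟨(t j)⁻¹ * g * t ((φ g)⁻¹ • j), wreath_elt_mem φ b t ht g j⟩

lemma wreathElt_mul (ht : ∀ j, φ (t j) • b = j) (g h : G) (j : 𝓑) :
    wreathElt φ b t ht (g * h) j
      = wreathElt φ b t ht g j * wreathElt φ b t ht h ((φ g)⁻¹ • j) := by
  have hsm : (φ (g * h))⁻¹ • j = (φ h)⁻¹ • ((φ g)⁻¹ • j) := by
    rw [map_mul, mul_inv_rev, mul_smul]
  refine Subtype.ext ?_
  show (t j)⁻¹ * (g * h) * t ((φ (g * h))⁻¹ • j) = _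
  rw [hsm]
  show _ = ((t j)⁻¹ * g * t ((φ g)⁻¹ • j)) *
      ((t ((φ g)⁻¹ • j))⁻¹ * h * t ((φ h)⁻¹ • ((φ g)⁻¹ • j)))
  group

lemma wreathElt_one (ht : ∀ j, φ (t j) • b = j) (j : 𝓑) : wreathElt φ b t ht 1 j = 1 := by
  refine Subtype.ext ?_
  show (t j)⁻¹ * 1 * t ((φ 1)⁻¹ • j) = 1
  simp

/-- The lift `G →* A ≀ B` of `φ` associated to `ψ : S →* A` and `u : 𝓑 → A`. -/
def wreathLift (ht : ∀ j, φ (t j) • b = j) (ψ : ↥((MulAction.stabilizer B b).comap φ) →* A) (u : 𝓑 → A) :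
    G →* WreathProduct A B 𝓑 where
  toFun g := ⟨fun j => u j * ψ (wreathElt φ b t ht g j) * (u ((φ g)⁻¹ • j))⁻¹, φ g⟩
  map_one' := by
    refine SemidirectProduct.ext ?_ (map_one φ)
    funext j
    show u j * ψ (wreathElt φ b t ht 1 j) * (u ((φ 1)⁻¹ • j))⁻¹ = 1
    simp [wreathElt_one]
  map_mul' g h := by
    refine SemidirectProduct.ext ?_ (map_mul φ g h)
    funext j
    show u j * ψ (wreathElt φ b t ht (g * h) j) * (u ((φ (g * h))⁻¹ • j))⁻¹ = _
    rw [SemidirectProduct.mul_left, Pi.mul_apply, wreathAut_apply]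
    have hsm : (φ (g * h))⁻¹ • j = (φ h)⁻¹ • ((φ g)⁻¹ • j) := by
      rw [map_mul, mul_inv_rev, mul_smul]
    rw [hsm, wreathElt_mul, map_mul]
    show _ = (u j * ψ (wreathElt φ b t ht g j) * (u ((φ g)⁻¹ • j))⁻¹) *
      (u ((φ g)⁻¹ • j) * ψ (wreathElt φ b t ht h ((φ g)⁻¹ • j)) *
        (u ((φ h)⁻¹ • ((φ g)⁻¹ • j)))⁻¹)
    group

end Aux

/-- If `φ : G →* B` induces a transitive action of `G` on `𝓑`, `b ∈ 𝓑`,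
and `S = φ⁻¹(Stab_B b)`, then the map `Ψ` sending a homomorphism `ρ : G →* A ≀ B` lying
over `φ` to the homomorphism `ρ_b : S →* A`, `s ↦ f_s b` (where `ρ s = (f_s, φ s)`),
is surjective onto all homomorphisms `S →* A`, with all fibers of size `|A|^(|𝓑| - 1)`. -/
theorem wreath_lift_fiber_card_transitive
    {G A B 𝓑 : Type*} [Group G] [Group A] [Group B] [Finite A] [MulAction B 𝓑] [Finite 𝓑]
    (φ : G →* B) (htrans : ∀ x y : 𝓑, ∃ g : G, φ g • x = y) (b : 𝓑) :
    ∃ Ψ : {ρ : G →* WreathProduct A B 𝓑 // SemidirectProduct.rightHom.comp ρ = φ} →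
        (↥((MulAction.stabilizer B b).comap φ) →* A),
      (∀ ρ s, Ψ ρ s = ((ρ : G →* WreathProduct A B 𝓑) (s : G)).left b) ∧
      Function.Surjective Ψ ∧
      ∀ ψ, Nat.card {ρ // Ψ ρ = ψ} = Nat.card A ^ (Nat.card 𝓑 - 1) := by
  classical
  obtain ⟨t, ht, htb⟩ : ∃ t : 𝓑 → G, (∀ j, φ (t j) • b = j) ∧ t b = 1 := by
    choose t0 ht0 using fun j => htrans b j
    refine ⟨fun j => if j = b then 1 else t0 j, fun j => ?_, by simp⟩
    by_cases h : j = b <;> simp [h, ht0]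
  have hstab : ∀ s : ↥((MulAction.stabilizer B b).comap φ), (φ (s : G))⁻¹ • b = b := by
    intro s
    exact inv_smul_eq_iff.mpr (Eq.symm s.2)
  have hright : ∀ (ρ : {ρ : G →* WreathProduct A B 𝓑 //
      SemidirectProduct.rightHom.comp ρ = φ}) (g : G),
      ((ρ : G →* WreathProduct A B 𝓑) g).right = φ g :=
    fun ρ g => DFunLike.congr_fun ρ.2 g
  have helt_self : ∀ s : ↥((MulAction.stabilizer B b).comap φ),
      wreathElt φ b t ht (s : G) b = s := by
    intro s
    refine Subtype.ext ?_
    show (t b)⁻¹ * (s : G) * t ((φ (s : G))⁻¹ • b) = (s : G)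
    rw [hstab s, htb]; group
  have hover : ∀ u : 𝓑 → A, ∀ ψ,
      SemidirectProduct.rightHom.comp (wreathLift φ b t ht ψ u) = φ :=
    fun u ψ => MonoidHom.ext fun g => rfl
  have hΨlift : ∀ (ψ : ↥((MulAction.stabilizer B b).comap φ) →* A) (u : 𝓑 → A), u b = 1 →
      ∀ s : ↥((MulAction.stabilizer B b).comap φ),
        ((wreathLift φ b t ht ψ u) (s : G)).left b = ψ s := by
    intro ψ u hu s
    show u b * ψ (wreathElt φ b t ht (s : G) b) * (u ((φ (s : G))⁻¹ • b))⁻¹ = ψ s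
    rw [hstab s, helt_self s, hu]
    group
  refine ⟨fun ρ => MonoidHom.mk' (fun s => ((ρ : G →* WreathProduct A B 𝓑) (s : G)).left b)
    (fun s s' => ?_), fun ρ s => rfl, ?_, ?_⟩
  · show ((ρ : G →* WreathProduct A B 𝓑) ((s : G) * (s' : G))).left b = _
    rw [map_mul, SemidirectProduct.mul_left, Pi.mul_apply, wreathAut_apply,
      hright ρ, hstab s]
  · -- surjectivity
    intro ψ
    exact ⟨⟨wreathLift φ b t ht ψ 1, hover 1 ψ⟩,
      MonoidHom.ext fun s => hΨlift ψ 1 rfl s⟩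
  · -- fiber cardinality
    intro ψ
    have key : ∀ (ρ : {ρ : G →* WreathProduct A B 𝓑 //
        SemidirectProduct.rightHom.comp ρ = φ}),
        (∀ s : ↥((MulAction.stabilizer B b).comap φ),
          ((ρ : G →* WreathProduct A B 𝓑) (s : G)).left b = ψ s) →
        ∀ (g : G) (j : 𝓑),
        ((ρ : G →* WreathProduct A B 𝓑) g).left j
          = ((ρ : G →* WreathProduct A B 𝓑) (t j)).left j * ψ (wreathElt φ b t ht g j) *
            (((ρ : G →* WreathProduct A B 𝓑) (t ((φ g)⁻¹ • j))).left ((φ g)⁻¹ • j))⁻¹ := by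
      intro ρ hψ g j
      set ρ' := (ρ : G →* WreathProduct A B 𝓑) with hρ'
      have hco : ∀ (x y : G) (i : 𝓑),
          (ρ' (x * y)).left i = (ρ' x).left i * (ρ' y).left ((φ x)⁻¹ • i) := by
        intro x y i
        rw [map_mul, SemidirectProduct.mul_left, Pi.mul_apply, wreathAut_apply, hright ρ]
      set k := (φ g)⁻¹ • j with hk
      have hwmem : (t j)⁻¹ * g * t k ∈ (MulAction.stabilizer B b).comap φ :=
        wreath_elt_mem φ b t ht g j
      set w := (t j)⁻¹ * g * t k with hw
      have hdecomp : g = t j * (w * (t k)⁻¹) := by rw [hw]; group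
      have htjb : (φ (t j))⁻¹ • j = b := inv_smul_eq_iff.mpr (ht j).symm
      have htkb : (φ (t k))⁻¹ • k = b := inv_smul_eq_iff.mpr (ht k).symm
      have hwb : (φ w)⁻¹ • b = b := hstab ⟨w, hwmem⟩
      have hinv : (ρ' ((t k)⁻¹)).left b = ((ρ' (t k)).left k)⁻¹ := by
        have h1 : (ρ' (t k * (t k)⁻¹)).left k = 1 := by
          rw [mul_inv_cancel, map_one, SemidirectProduct.one_left]; rfl
        rw [hco (t k) ((t k)⁻¹) k, htkb] at h1
        exact (inv_eq_of_mul_eq_one_right h1).symm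
      have hψw : (ρ' w).left b = ψ (wreathElt φ b t ht g j) :=
        hψ (wreathElt φ b t ht g j)
      calc (ρ' g).left j = (ρ' (t j * (w * (t k)⁻¹))).left j := by rw [← hdecomp]
        _ = (ρ' (t j)).left j * (ρ' (w * (t k)⁻¹)).left b := by rw [hco, htjb]
        _ = (ρ' (t j)).left j * ((ρ' w).left b * (ρ' ((t k)⁻¹)).left b) := by
            rw [hco w ((t k)⁻¹) b, hwb]
        _ = (ρ' (t j)).left j * (ψ (wreathElt φ b t ht g j) * ((ρ' (t k)).left k)⁻¹) := by
            rw [hinv, hψw]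
        _ = _ := by rw [mul_assoc]
    refine (Nat.card_congr
      (⟨fun ρ => ⟨fun j => ((ρ.1 : G →* WreathProduct A B 𝓑) (t j)).left j, ?_⟩,
        fun u => ⟨⟨wreathLift φ b t ht ψ u.1, hover u.1 ψ⟩,
          MonoidHom.ext fun s => hΨlift ψ u.1 u.2 s⟩,
        ?_, ?_⟩ : _ ≃ {u : 𝓑 → A // u b = 1})).trans ?_
    · show ((ρ.1 : G →* WreathProduct A B 𝓑) (t b)).left b = 1
      rw [htb, map_one, SemidirectProduct.one_left]; rfl
    · -- left inverse
      intro ρ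
      have hψρ : ∀ s : ↥((MulAction.stabilizer B b).comap φ),
          ((ρ.1 : G →* WreathProduct A B 𝓑) (s : G)).left b = ψ s :=
        fun s => DFunLike.congr_fun ρ.2 s
      refine Subtype.ext (Subtype.ext (MonoidHom.ext fun g => ?_))
      refine SemidirectProduct.ext ?_ (hright ρ.1 g).symm
      funext j
      exact (key ρ.1 hψρ g j).symm
    · -- right inverse
      intro u
      refine Subtype.ext (funext fun j => ?_)
      show u.1 j * ψ (wreathElt φ b t ht (t j) j) * (u.1 ((φ (t j))⁻¹ • j))⁻¹ = u.1 j
      have htjb : (φ (t j))⁻¹ • j = b := inv_smul_eq_iff.mpr (ht j).symm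
      have helt : wreathElt φ b t ht (t j) j = 1 := by
        refine Subtype.ext ?_
        show (t j)⁻¹ * t j * t ((φ (t j))⁻¹ • j) = 1
        rw [htjb, htb]; group
      rw [htjb, helt, map_one, u.2]
      group
    · -- counting
      have e2 : {u : 𝓑 → A // u b = 1} ≃ ({j : 𝓑 // j ≠ b} → A) :=
        { toFun := fun u j => u.1 j.1
          invFun := fun v => ⟨fun j => if h : j = b then 1 else v ⟨j, h⟩, by simp⟩
          left_inv := fun u => Subtype.ext (funext fun j => by
            by_cases h : j = b
            · simp [h, ← u.2]
            · simp [h])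
          right_inv := fun v => funext fun j => by simp [j.2] }
      rw [Nat.card_congr e2, Nat.card_fun]
      congr 1
      have := Fintype.ofFinite 𝓑
      rw [Nat.card_eq_fintype_card, Nat.card_eq_fintype_card]
      rw [Fintype.card_subtype_compl (fun j : 𝓑 => j = b), Fintype.card_subtype_eq]
end

section
/- Let G, A, B be groups, with A finite and B acting on a finite set 𝓑, and let φ : G → B be any group homomorphism. Let the action of G on 𝓑 via φ have exactly r orbits, choose orbit representatives b₁, …, b_r, and set S_i = φ⁻¹(Stab_B(b_i)) ≤ G. Then the map Ψ sending a homomorphism ρ : G → A ≀ B with π ∘ ρ = φ to the tuple (ρ_{b₁}, …, ρ_{b_r}) is surjective onto the product of the sets of group homomorphisms Hom(S₁, A) × ⋯ × Hom(S_r, A), and every fiber of Ψ has cardinality |A|^(|𝓑| − r). -/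
/-- The set of orbits of the action of `G` on `𝓑` induced by `φ : G →* B`. -/
def orbitQuot {G B : Type*} (𝓑 : Type*) [Group G] [Group B] [MulAction B 𝓑]
    (φ : G →* B) : Type _ :=
  letI : MulAction G 𝓑 := MulAction.compHom 𝓑 φ
  MulAction.orbitRel.Quotient G 𝓑

/-- The orbit (for the action of `G` on `𝓑` induced by `φ`) of an element of `𝓑`. -/
def orbitQuotMk {G B : Type*} (𝓑 : Type*) [Group G] [Group B] [MulAction B 𝓑]
    (φ : G →* B) (x : 𝓑) : orbitQuot 𝓑 φ :=
  letI : MulAction G 𝓑 := MulAction.compHom 𝓑 φ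
  Quotient.mk'' x

section Aux
namespace WreathAux

variable {G A B 𝓑 : Type*} [Group G] [Group A] [Group B] [MulAction B 𝓑]
variable (φ : G →* B)

lemma mk_eq_iff {x y : 𝓑} :
    orbitQuotMk 𝓑 φ x = orbitQuotMk 𝓑 φ y ↔ ∃ s : G, φ s • y = x := by
  letI : MulAction G 𝓑 := MulAction.compHom 𝓑 φ
  show (Quotient.mk'' x : MulAction.orbitRel.Quotient G 𝓑) = Quotient.mk'' y ↔ _
  rw [Quotient.eq'']
  exact (MulAction.orbitRel_apply (G := G)).trans MulAction.mem_orbit_iff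

lemma mk_smul (s : G) (j : 𝓑) :
    orbitQuotMk 𝓑 φ (φ s • j) = orbitQuotMk 𝓑 φ j :=
  (mk_eq_iff φ).2 ⟨s, rfl⟩

end WreathAux
end Aux

section Aux2
namespace WreathAux
open MulAction
open scoped Classical

variable {G A B 𝓑 : Type*} [Group G] [Group A] [Group B] [MulAction B 𝓑]
variable (φ : G →* B) (rep : orbitQuot 𝓑 φ → 𝓑)
variable (hrep : ∀ ω : orbitQuot 𝓑 φ, orbitQuotMk 𝓑 φ (rep ω) = ω)

/-- A transversal: `trans j` maps the orbit representative to `j`. -/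
noncomputable def trans (j : 𝓑) : G :=
  if h : ∃ ω, rep ω = j then 1
  else ((mk_eq_iff φ).1 (hrep (orbitQuotMk 𝓑 φ j)).symm).choose

lemma htrans (j : 𝓑) : φ (trans φ rep hrep j) • rep (orbitQuotMk 𝓑 φ j) = j := by
  unfold trans
  split
  · rename_i h
    obtain ⟨ω, rfl⟩ := h
    rw [hrep ω, map_one, one_smul]
  · exact ((mk_eq_iff φ).1 (hrep (orbitQuotMk 𝓑 φ j)).symm).choose_spec

lemma trans_rep (ω : orbitQuot 𝓑 φ) : trans φ rep hrep (rep ω) = 1 :=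
  dif_pos ⟨ω, rfl⟩

lemma mem_S (s : G) (j : 𝓑) :
    (trans φ rep hrep j)⁻¹ * s * trans φ rep hrep ((φ s)⁻¹ • j) ∈
      (stabilizer B (rep (orbitQuotMk 𝓑 φ j))).comap φ := by
  have h1 : orbitQuotMk 𝓑 φ ((φ s)⁻¹ • j) = orbitQuotMk 𝓑 φ j := by
    have := mk_smul φ s⁻¹ j; rwa [map_inv] at this
  have h2 := htrans φ rep hrep ((φ s)⁻¹ • j)
  rw [h1] at h2
  simp only [Subgroup.mem_comap, MulAction.mem_stabilizer_iff, map_mul, map_inv, mul_smul, h2]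
  rw [smul_inv_smul, inv_smul_eq_iff, htrans φ rep hrep j]

end WreathAux
end Aux2

section Aux3
namespace WreathAux
open MulAction SemidirectProduct

variable {G A B 𝓑 : Type*} [Group G] [Group A] [Group B] [MulAction B 𝓑]
variable (φ : G →* B) (rep : orbitQuot 𝓑 φ → 𝓑)
variable (hrep : ∀ ω : orbitQuot 𝓑 φ, orbitQuotMk 𝓑 φ (rep ω) = ω)

lemma psi_congr (ψ : ∀ ω : orbitQuot 𝓑 φ, ↥((stabilizer B (rep ω)).comap φ) →* A)
    {ω ω' : orbitQuot 𝓑 φ} (h : ω = ω') {x y : G} (hxy : x = y)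
    (hx : x ∈ (stabilizer B (rep ω)).comap φ)
    (hy : y ∈ (stabilizer B (rep ω')).comap φ) :
    ψ ω ⟨x, hx⟩ = ψ ω' ⟨y, hy⟩ := by subst h; subst hxy; rfl

variable (ψ : ∀ ω : orbitQuot 𝓑 φ, ↥((stabilizer B (rep ω)).comap φ) →* A)

/-- The crossed homomorphism built from the data `(ψ, c)`. -/
noncomputable def bigF (c : 𝓑 → A) (s : G) (j : 𝓑) : A :=
  c j * ψ (orbitQuotMk 𝓑 φ j)
      ⟨(trans φ rep hrep j)⁻¹ * s * trans φ rep hrep ((φ s)⁻¹ • j), mem_S φ rep hrep s j⟩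
    * (c ((φ s)⁻¹ • j))⁻¹

lemma bigF_one (c : 𝓑 → A) (j : 𝓑) : bigF φ rep hrep ψ c 1 j = 1 := by
  unfold bigF
  have h1 : (φ (1 : G))⁻¹ • j = j := by simp
  have h2 : ψ (orbitQuotMk 𝓑 φ j)
      ⟨(trans φ rep hrep j)⁻¹ * 1 * trans φ rep hrep ((φ (1:G))⁻¹ • j),
        mem_S φ rep hrep 1 j⟩ = 1 := by
    have : (⟨(trans φ rep hrep j)⁻¹ * 1 * trans φ rep hrep ((φ (1:G))⁻¹ • j),
        mem_S φ rep hrep 1 j⟩ :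
        ↥((stabilizer B (rep (orbitQuotMk 𝓑 φ j))).comap φ)) = 1 := by
      apply Subtype.ext
      show (trans φ rep hrep j)⁻¹ * 1 * trans φ rep hrep ((φ (1:G))⁻¹ • j) = 1
      rw [h1]; group
    rw [this, map_one]
  rw [h2, show (c ((φ (1:G))⁻¹ • j)) = c j by rw [h1]]
  group

lemma bigF_mul (c : 𝓑 → A) (s t : G) (j : 𝓑) :
    bigF φ rep hrep ψ c (s * t) j
      = bigF φ rep hrep ψ c s j * bigF φ rep hrep ψ c t ((φ s)⁻¹ • j) := by
  have hj : (φ (s * t))⁻¹ • j = (φ t)⁻¹ • ((φ s)⁻¹ • j) := by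
    rw [map_mul, mul_inv_rev, mul_smul]
  have h1 : orbitQuotMk 𝓑 φ ((φ s)⁻¹ • j) = orbitQuotMk 𝓑 φ j := by
    have := mk_smul φ s⁻¹ j; rwa [map_inv] at this
  have hb : (trans φ rep hrep ((φ s)⁻¹ • j))⁻¹ * t
        * trans φ rep hrep ((φ t)⁻¹ • ((φ s)⁻¹ • j)) ∈
      (stabilizer B (rep (orbitQuotMk 𝓑 φ j))).comap φ :=
    h1 ▸ mem_S φ rep hrep t ((φ s)⁻¹ • j)
  have hψ : ψ (orbitQuotMk 𝓑 φ j)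
      ⟨(trans φ rep hrep j)⁻¹ * (s * t) * trans φ rep hrep ((φ (s * t))⁻¹ • j),
        mem_S φ rep hrep (s * t) j⟩
      = ψ (orbitQuotMk 𝓑 φ j)
          ⟨(trans φ rep hrep j)⁻¹ * s * trans φ rep hrep ((φ s)⁻¹ • j),
            mem_S φ rep hrep s j⟩
        * ψ (orbitQuotMk 𝓑 φ ((φ s)⁻¹ • j))
          ⟨(trans φ rep hrep ((φ s)⁻¹ • j))⁻¹ * t
              * trans φ rep hrep ((φ t)⁻¹ • ((φ s)⁻¹ • j)),
            mem_S φ rep hrep t ((φ s)⁻¹ • j)⟩ := by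
    rw [psi_congr φ rep ψ h1 rfl (mem_S φ rep hrep t ((φ s)⁻¹ • j)) hb, ← map_mul]
    apply congrArg
    apply Subtype.ext
    show (trans φ rep hrep j)⁻¹ * (s * t) * trans φ rep hrep ((φ (s * t))⁻¹ • j)
        = ((trans φ rep hrep j)⁻¹ * s * trans φ rep hrep ((φ s)⁻¹ • j))
        * ((trans φ rep hrep ((φ s)⁻¹ • j))⁻¹ * t
            * trans φ rep hrep ((φ t)⁻¹ • ((φ s)⁻¹ • j)))
    rw [show (trans φ rep hrep ((φ (s * t))⁻¹ • j)) =
      trans φ rep hrep ((φ t)⁻¹ • ((φ s)⁻¹ • j)) from by rw [hj]]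
    group
  unfold bigF
  rw [hψ, show (c ((φ (s * t))⁻¹ • j)) = c ((φ t)⁻¹ • ((φ s)⁻¹ • j)) from by rw [hj]]
  group

/-- The lift `G →* A ≀ B` built from the data `(ψ, c)`. -/
noncomputable def bigRho (c : 𝓑 → A) : G →* WreathProduct A B 𝓑 where
  toFun s := ⟨bigF φ rep hrep ψ c s, φ s⟩
  map_one' := by
    apply SemidirectProduct.ext
    · funext j; exact bigF_one φ rep hrep ψ c j
    · exact map_one φ
  map_mul' s t := by
    apply SemidirectProduct.ext
    · funext j; exact bigF_mul φ rep hrep ψ c s t j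
    · exact map_mul φ s t

end WreathAux
end Aux3

section Aux4
namespace WreathAux
open MulAction SemidirectProduct

variable {G A B 𝓑 : Type*} [Group G] [Group A] [Group B] [MulAction B 𝓑]
variable (φ : G →* B) (rep : orbitQuot 𝓑 φ → 𝓑)
variable (hrep : ∀ ω : orbitQuot 𝓑 φ, orbitQuotMk 𝓑 φ (rep ω) = ω)
variable (ρ : G →* WreathProduct A B 𝓑)

lemma right_eq (hρ : SemidirectProduct.rightHom.comp ρ = φ) (s : G) : (ρ s).right = φ s := DFunLike.congr_fun hρ s

lemma left_mul (hρ : SemidirectProduct.rightHom.comp ρ = φ) (s t : G) (j : 𝓑) :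
    (ρ (s * t)).left j = (ρ s).left j * (ρ t).left ((φ s)⁻¹ • j) := by
  rw [map_mul, SemidirectProduct.mul_left, Pi.mul_apply]
  congr 2
  show (ρ t).left ((ρ s).right⁻¹ • j) = _
  rw [right_eq φ ρ hρ s]

lemma left_inv_eq (hρ : SemidirectProduct.rightHom.comp ρ = φ) (s : G) (j : 𝓑) :
    (ρ s⁻¹).left ((φ s)⁻¹ • j) = ((ρ s).left j)⁻¹ := by
  have h := left_mul φ ρ hρ s s⁻¹ j
  rw [mul_inv_cancel, map_one] at h
  have h0 : ((1 : WreathProduct A B 𝓑)).left j = 1 := rfl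
  rw [h0] at h
  exact eq_inv_of_mul_eq_one_right h.symm
  
/-- The tuple of homomorphisms `S_ω →* A` extracted from a lift `ρ`. -/
def PsiMap (hρ : SemidirectProduct.rightHom.comp ρ = φ) (ω : orbitQuot 𝓑 φ) : ↥((stabilizer B (rep ω)).comap φ) →* A where
  toFun s := (ρ (s : G)).left (rep ω)
  map_one' := by
    show (ρ ((1 : ↥((stabilizer B (rep ω)).comap φ)) : G)).left (rep ω) = 1
    rw [OneMemClass.coe_one, map_one]; rfl
  map_mul' s t := by
    show (ρ ((↑(s * t) : G))).left (rep ω) = _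
    rw [Subgroup.coe_mul, left_mul φ ρ hρ]
    have hs2 : (φ (s : G))⁻¹ • rep ω = rep ω := by
      have h2 := s.2
      rw [Subgroup.mem_comap, MulAction.mem_stabilizer_iff] at h2
      rw [inv_smul_eq_iff]; exact h2.symm
    rw [hs2]

lemma left_decomp (hρ : SemidirectProduct.rightHom.comp ρ = φ) (s : G) (j : 𝓑) :
    (ρ s).left j
      = (ρ (trans φ rep hrep j)).left j
        * (ρ ((trans φ rep hrep j)⁻¹ * s * trans φ rep hrep ((φ s)⁻¹ • j))).left
            (rep (orbitQuotMk 𝓑 φ j))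
        * ((ρ (trans φ rep hrep ((φ s)⁻¹ • j))).left ((φ s)⁻¹ • j))⁻¹ := by
  set t1 := trans φ rep hrep j with ht1
  set t2 := trans φ rep hrep ((φ s)⁻¹ • j) with ht2
  set u := t1⁻¹ * s * t2 with hu
  have hrepj : (φ t1)⁻¹ • j = rep (orbitQuotMk 𝓑 φ j) := by
    rw [inv_smul_eq_iff, htrans φ rep hrep j]
  have h1 : orbitQuotMk 𝓑 φ ((φ s)⁻¹ • j) = orbitQuotMk 𝓑 φ j := by
    have := mk_smul φ s⁻¹ j; rwa [map_inv] at this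
  have hrepj2 : (φ t2)⁻¹ • ((φ s)⁻¹ • j) = rep (orbitQuotMk 𝓑 φ j) := by
    rw [inv_smul_eq_iff, ← h1, htrans φ rep hrep ((φ s)⁻¹ • j)]
  have hs : s = t1 * (u * t2⁻¹) := by rw [hu]; group
  have step1 : (ρ s).left j = (ρ t1).left j * (ρ (u * t2⁻¹)).left (rep (orbitQuotMk 𝓑 φ j)) := by
    conv_lhs => rw [hs]
    rw [left_mul φ ρ hρ, hrepj]
  have hu_stab : (φ u)⁻¹ • rep (orbitQuotMk 𝓑 φ j) = rep (orbitQuotMk 𝓑 φ j) := by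
    rw [inv_smul_eq_iff]
    have hm := mem_S φ rep hrep s j
    rw [Subgroup.mem_comap, MulAction.mem_stabilizer_iff] at hm
    exact hm.symm
  have step2 : (ρ (u * t2⁻¹)).left (rep (orbitQuotMk 𝓑 φ j))
      = (ρ u).left (rep (orbitQuotMk 𝓑 φ j))
        * (ρ t2⁻¹).left (rep (orbitQuotMk 𝓑 φ j)) := by
    rw [left_mul φ ρ hρ, hu_stab]
  have step3 : (ρ t2⁻¹).left (rep (orbitQuotMk 𝓑 φ j))
      = ((ρ t2).left ((φ s)⁻¹ • j))⁻¹ := by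
    rw [← hrepj2]
    exact left_inv_eq φ ρ hρ t2 ((φ s)⁻¹ • j)
  rw [step1, step2, step3, mul_assoc]

end WreathAux
end Aux4

section Aux5
namespace WreathAux
open MulAction SemidirectProduct

variable {G A B 𝓑 : Type*} [Group G] [Group A] [Group B] [MulAction B 𝓑]
variable (φ : G →* B) (rep : orbitQuot 𝓑 φ → 𝓑)
variable (hrep : ∀ ω : orbitQuot 𝓑 φ, orbitQuotMk 𝓑 φ (rep ω) = ω)
variable (ψ : ∀ ω : orbitQuot 𝓑 φ, ↥((stabilizer B (rep ω)).comap φ) →* A)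

lemma bigRho_right (c : 𝓑 → A) :
    SemidirectProduct.rightHom.comp (bigRho φ rep hrep ψ c) = φ := by
  ext s; rfl

lemma PsiMap_bigRho (c : 𝓑 → A) (hc : ∀ ω, c (rep ω) = 1) :
    PsiMap φ rep (bigRho φ rep hrep ψ c) (bigRho_right φ rep hrep ψ c) = ψ := by
  funext ω
  ext s
  show bigF φ rep hrep ψ c (s : G) (rep ω) = ψ ω s
  have h2 := s.2
  rw [Subgroup.mem_comap, MulAction.mem_stabilizer_iff] at h2
  have hs2 : (φ (s : G))⁻¹ • rep ω = rep ω := by rw [inv_smul_eq_iff]; exact h2.symm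
  have helem : (trans φ rep hrep (rep ω))⁻¹ * (s : G)
      * trans φ rep hrep ((φ (s : G))⁻¹ • rep ω) = (s : G) := by
    rw [show trans φ rep hrep ((φ (s : G))⁻¹ • rep ω) = trans φ rep hrep (rep ω) from by
      rw [hs2], trans_rep φ rep hrep ω]
    group
  unfold bigF
  rw [psi_congr φ rep ψ (hrep ω) helem (mem_S φ rep hrep (s : G) (rep ω)) s.2,
    show c ((φ (s : G))⁻¹ • rep ω) = c (rep ω) from by rw [hs2], hc ω]
  simp

lemma bigRho_c (c : 𝓑 → A) (hc : ∀ ω, c (rep ω) = 1) (j : 𝓑) :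
    (bigRho φ rep hrep ψ c (trans φ rep hrep j)).left j = c j := by
  show bigF φ rep hrep ψ c (trans φ rep hrep j) j = c j
  have hT : (φ (trans φ rep hrep j))⁻¹ • j = rep (orbitQuotMk 𝓑 φ j) := by
    rw [inv_smul_eq_iff, htrans φ rep hrep j]
  have h2 : (⟨(trans φ rep hrep j)⁻¹ * trans φ rep hrep j
        * trans φ rep hrep ((φ (trans φ rep hrep j))⁻¹ • j),
      mem_S φ rep hrep (trans φ rep hrep j) j⟩ :
      ↥((stabilizer B (rep (orbitQuotMk 𝓑 φ j))).comap φ)) = 1 := by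
    apply Subtype.ext
    show (trans φ rep hrep j)⁻¹ * trans φ rep hrep j
        * trans φ rep hrep ((φ (trans φ rep hrep j))⁻¹ • j) = 1
    rw [show trans φ rep hrep ((φ (trans φ rep hrep j))⁻¹ • j)
        = trans φ rep hrep (rep (orbitQuotMk 𝓑 φ j)) from by rw [hT],
      trans_rep φ rep hrep]
    group
  unfold bigF
  rw [h2, map_one,
    show c ((φ (trans φ rep hrep j))⁻¹ • j) = c (rep (orbitQuotMk 𝓑 φ j)) from by rw [hT],
    hc]
  group

lemma rho_eq_bigRho (ρ : G →* WreathProduct A B 𝓑)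
    (hρ : SemidirectProduct.rightHom.comp ρ = φ) :
    ρ = bigRho φ rep hrep (PsiMap φ rep ρ hρ)
      (fun j => (ρ (trans φ rep hrep j)).left j) := by
  refine MonoidHom.ext fun s => SemidirectProduct.ext ?_ ?_
  · funext j
    show (ρ s).left j = bigF φ rep hrep (PsiMap φ rep ρ hρ)
      (fun j => (ρ (trans φ rep hrep j)).left j) s j
    unfold bigF
    exact left_decomp φ rep hrep ρ hρ s j
  · exact right_eq φ ρ hρ s

end WreathAux
end Aux5

section Aux6
namespace WreathAux
open MulAction SemidirectProduct
open scoped Classical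

variable {G A B 𝓑 : Type*} [Group G] [Group A] [Group B] [MulAction B 𝓑]
variable (φ : G →* B) (rep : orbitQuot 𝓑 φ → 𝓑)
variable (hrep : ∀ ω : orbitQuot 𝓑 φ, orbitQuotMk 𝓑 φ (rep ω) = ω)

/-- The subtype of functions vanishing on the representatives is equivalent to
functions on the complement of the representatives. -/
noncomputable def cEquiv :
    {c : 𝓑 → A // ∀ ω, c (rep ω) = 1} ≃ (((Set.range rep)ᶜ : Set 𝓑) → A) where
  toFun c := fun j => c.1 j.1
  invFun d := ⟨fun j => if h : j ∈ Set.range rep then 1 else d ⟨j, h⟩,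
    fun ω => dif_pos ⟨ω, rfl⟩⟩
  left_inv c := by
    apply Subtype.ext
    funext j
    show (if h : j ∈ Set.range rep then 1 else _) = c.1 j
    by_cases h : j ∈ Set.range rep
    · obtain ⟨ω, rfl⟩ := h
      rw [dif_pos ⟨ω, rfl⟩, c.2 ω]
    · exact dif_neg h
  right_inv d := by
    funext j
    exact dif_neg j.2

include hrep in
lemma card_c [Finite A] [Finite 𝓑] :
    Nat.card {c : 𝓑 → A // ∀ ω, c (rep ω) = 1}
      = Nat.card A ^ (Nat.card 𝓑 - Nat.card (orbitQuot 𝓑 φ)) := by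
  have hinj : Function.Injective rep := fun ω ω' h => by
    rw [← hrep ω, ← hrep ω', h]
  rw [Nat.card_congr (cEquiv (A := A) φ rep), Nat.card_fun]
  congr 1
  have h1 : Nat.card (Set.range rep) = Nat.card (orbitQuot 𝓑 φ) :=
    Nat.card_range_of_injective hinj
  have h2 := Set.ncard_add_ncard_compl (Set.range rep)
  rw [Nat.card_coe_set_eq, ← h1, Nat.card_coe_set_eq]
  omega

end WreathAux
end Aux6


/-- For any `φ : G →* B`, with `r` the number of orbits of the induced
action of `G` on `𝓑` and chosen orbit representatives `rep ω`, the map `Ψ` sending a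
homomorphism `ρ : G →* A ≀ B` lying over `φ` to the tuple of homomorphisms
`ρ_{rep ω} : S_ω →* A` (where `S_ω = φ⁻¹(Stab_B (rep ω))`) is surjective onto the product
of the sets of homomorphisms, with all fibers of size `|A|^(|𝓑| - r)`. -/
theorem wreath_lift_fiber_card
    {G A B 𝓑 : Type*} [Group G] [Group A] [Group B] [Finite A] [MulAction B 𝓑] [Finite 𝓑]
    (φ : G →* B) (rep : orbitQuot 𝓑 φ → 𝓑)
    (hrep : ∀ ω : orbitQuot 𝓑 φ, orbitQuotMk 𝓑 φ (rep ω) = ω) :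
    ∃ Ψ : {ρ : G →* WreathProduct A B 𝓑 // SemidirectProduct.rightHom.comp ρ = φ} →
        (∀ ω : orbitQuot 𝓑 φ, ↥((MulAction.stabilizer B (rep ω)).comap φ) →* A),
      (∀ ρ (ω : orbitQuot 𝓑 φ) s,
          Ψ ρ ω s = ((ρ : G →* WreathProduct A B 𝓑) (s : G)).left (rep ω)) ∧
      Function.Surjective Ψ ∧
      ∀ ψ, Nat.card {ρ // Ψ ρ = ψ} =
        Nat.card A ^ (Nat.card 𝓑 - Nat.card (orbitQuot 𝓑 φ)) := by
  classical
  refine ⟨fun ρ => WreathAux.PsiMap φ rep ρ.1 ρ.2, fun ρ ω s => rfl, ?_, ?_⟩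
  · intro ψ
    exact ⟨⟨WreathAux.bigRho φ rep hrep ψ (fun _ => 1),
      WreathAux.bigRho_right φ rep hrep ψ _⟩,
      WreathAux.PsiMap_bigRho φ rep hrep ψ _ (fun _ => rfl)⟩
  · intro ψ
    have hbij : Function.Bijective
        (fun c : {c : 𝓑 → A // ∀ ω, c (rep ω) = 1} =>
          (⟨⟨WreathAux.bigRho φ rep hrep ψ c.1,
              WreathAux.bigRho_right φ rep hrep ψ c.1⟩,
            WreathAux.PsiMap_bigRho φ rep hrep ψ c.1 c.2⟩ :
            {ρ : {ρ : G →* WreathProduct A B 𝓑 //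
                SemidirectProduct.rightHom.comp ρ = φ} //
              WreathAux.PsiMap φ rep ρ.1 ρ.2 = ψ})) := by
      constructor
      · intro c c' h
        have h2 : WreathAux.bigRho φ rep hrep ψ c.1 = WreathAux.bigRho φ rep hrep ψ c'.1 := by
          have := congrArg (fun x => x.1.1) h
          exact this
        apply Subtype.ext
        funext j
        rw [← WreathAux.bigRho_c φ rep hrep ψ c.1 c.2 j, h2,
          WreathAux.bigRho_c φ rep hrep ψ c'.1 c'.2 j]
      · rintro ⟨⟨ρ, hρ⟩, hψ⟩
        have hψ' : WreathAux.PsiMap φ rep ρ hρ = ψ := hψ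
        subst hψ'
        refine ⟨⟨fun j => (ρ (WreathAux.trans φ rep hrep j)).left j, ?_⟩, ?_⟩
        · intro ω
          show (ρ (WreathAux.trans φ rep hrep (rep ω))).left (rep ω) = 1
          rw [WreathAux.trans_rep φ rep hrep ω, map_one]
          rfl
        · apply Subtype.ext
          apply Subtype.ext
          exact (WreathAux.rho_eq_bigRho φ rep hrep ρ hρ).symm
    rw [← Nat.card_congr (Equiv.ofBijective _ hbij)]
    exact WreathAux.card_c φ rep hrep
end

section
/- Let G, A, B be finite groups, with B acting on a finite set 𝓑. Then the number of group homomorphisms from G to A ≀ B equals the sum, over all group homomorphisms φ : G → B, of |A|^(|𝓑| − r(φ)) times the product over the r(φ) orbits of the φ-action of G on 𝓑 (with chosen orbit representatives b₁, …, b_{r(φ)}) of the number of group homomorphisms from S_i = φ⁻¹(Stab_B(b_i)) to A; that is, |Hom(G, A ≀ B)| = Σ_{φ : G → B} |A|^(|𝓑| − r(φ)) · Π_{i=1}^{r(φ)} |Hom(S_i, A)|. The value does not depend on the choice of orbit representatives. -/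
set_option linter.unusedSectionVars false

namespace WreathCount

variable {G A B 𝓑 : Type*} [Group G] [Group A] [Group B] [MulAction B 𝓑]

lemma orbitQuotMk_eq_iff (φ : G →* B) {x y : 𝓑} :
    orbitQuotMk 𝓑 φ x = orbitQuotMk 𝓑 φ y ↔ ∃ g : G, φ g • y = x := by
  letI : MulAction G 𝓑 := MulAction.compHom 𝓑 φ
  show (Quotient.mk'' x : MulAction.orbitRel.Quotient G 𝓑) = Quotient.mk'' y ↔ _
  rw [Quotient.eq'', MulAction.orbitRel_apply, MulAction.mem_orbit_iff]
  rfl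

lemma orbitQuotMk_surj (φ : G →* B) (ω : orbitQuot 𝓑 φ) : ∃ j, orbitQuotMk 𝓑 φ j = ω := by
  letI : MulAction G 𝓑 := MulAction.compHom 𝓑 φ
  obtain ⟨j⟩ := ω
  exact ⟨j, rfl⟩

instance (φ : G →* B) [Finite 𝓑] : Finite (orbitQuot 𝓑 φ) :=
  letI : MulAction G 𝓑 := MulAction.compHom 𝓑 φ
  (Quotient.finite _ : Finite (MulAction.orbitRel.Quotient G 𝓑))

/-- Cocycles: functions `F : G → 𝓑 → A` with the twisted multiplicativity condition. -/
def Coc (A : Type*) [Group A] {G B : Type*} (𝓑 : Type*) [Group G] [Group B]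
    [MulAction B 𝓑] (φ : G →* B) : Type _ :=
  {F : G → 𝓑 → A // ∀ g h j, F (g * h) j = F g j * F h ((φ g)⁻¹ • j)}

instance (φ : G →* B) [Finite G] [Finite A] [Finite 𝓑] : Finite (Coc A 𝓑 φ) :=
  Subtype.finite

lemma Coc.one (φ : G →* B) (F : Coc A 𝓑 φ) (j : 𝓑) : F.1 1 j = 1 := by
  have := F.2 1 1 j
  simp only [mul_one, map_one, inv_one, one_smul] at this
  exact (left_eq_mul.mp this)

/-- Homomorphisms into the wreath product correspond to pairs (φ, cocycle). -/
def homEquivSigma : (G →* WreathProduct A B 𝓑) ≃ Σ φ : G →* B, Coc A 𝓑 φ where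
  toFun ψ := ⟨SemidirectProduct.rightHom.comp ψ, fun g => (ψ g).left, fun g h j => by
    show (ψ (g * h)).left j = (ψ g).left j * (ψ h).left _
    rw [map_mul ψ g h]
    rfl⟩
  invFun x :=
    { toFun := fun g => ⟨x.2.1 g, x.1 g⟩
      map_one' := by
        ext
        · exact Coc.one x.1 x.2 _
        · simp
      map_mul' := fun g h => by
        ext j
        · exact x.2.2 g h j
        · simp }
  left_inv ψ := by ext g <;> rfl
  right_inv x := rfl

section FixPhi

variable [Finite G] [Finite 𝓑] (φ : G →* B) (rep : orbitQuot 𝓑 φ → 𝓑)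
  (hrep : ∀ ω, orbitQuotMk 𝓑 φ (rep ω) = ω)

lemma mk_smul (g : G) (j : 𝓑) : orbitQuotMk 𝓑 φ (φ g • j) = orbitQuotMk 𝓑 φ j :=
  (orbitQuotMk_eq_iff φ).mpr ⟨g, rfl⟩

lemma mk_inv_smul (g : G) (j : 𝓑) : orbitQuotMk 𝓑 φ ((φ g)⁻¹ • j) = orbitQuotMk 𝓑 φ j := by
  rw [← map_inv]; exact mk_smul φ g⁻¹ j

include hrep in
lemma exists_transfer (j : 𝓑) : ∃ g : G, φ g • rep (orbitQuotMk 𝓑 φ j) = j :=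
  (orbitQuotMk_eq_iff φ).mp (hrep (orbitQuotMk 𝓑 φ j)).symm

open Classical in
noncomputable def sec (j : 𝓑) : G :=
  if j = rep (orbitQuotMk 𝓑 φ j) then 1 else (exists_transfer φ rep hrep j).choose

lemma sec_spec (j : 𝓑) : φ (sec φ rep hrep j) • rep (orbitQuotMk 𝓑 φ j) = j := by
  unfold sec
  split
  · next h => simpa using h.symm
  · exact (exists_transfer φ rep hrep j).choose_spec

lemma sec_spec' (j : 𝓑) : (φ (sec φ rep hrep j))⁻¹ • j = rep (orbitQuotMk 𝓑 φ j) := by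
  rw [inv_smul_eq_iff]; exact (sec_spec φ rep hrep j).symm

lemma sec_rep (ω : orbitQuot 𝓑 φ) : sec φ rep hrep (rep ω) = 1 := by
  unfold sec
  rw [if_pos]
  rw [hrep]

/-- The stabilizer subgroup `φ⁻¹(Stab_B (rep ω))`. -/
abbrev stab (ω : orbitQuot 𝓑 φ) : Subgroup G := (MulAction.stabilizer B (rep ω)).comap φ

open Classical in
noncomputable def rhoHat (ρ : ∀ ω, (stab φ rep ω →* A)) (ω : orbitQuot 𝓑 φ) (g : G) : A :=
  if h : g ∈ stab φ rep ω then ρ ω ⟨g, h⟩ else 1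

lemma rhoHat_mul (ρ : ∀ ω, (stab φ rep ω →* A)) (ω : orbitQuot 𝓑 φ) {a b : G}
    (ha : a ∈ stab φ rep ω) (hb : b ∈ stab φ rep ω) :
    rhoHat φ rep ρ ω (a * b) = rhoHat φ rep ρ ω a * rhoHat φ rep ρ ω b := by
  unfold rhoHat
  rw [dif_pos (mul_mem ha hb), dif_pos ha, dif_pos hb, ← map_mul]
  rfl

lemma rhoHat_one (ρ : ∀ ω, (stab φ rep ω →* A)) (ω : orbitQuot 𝓑 φ) :
    rhoHat φ rep ρ ω 1 = 1 := by
  unfold rhoHat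
  rw [dif_pos (one_mem _)]
  exact map_one (ρ ω)

lemma mem_stab_aux (g : G) (j : 𝓑) :
    (sec φ rep hrep j)⁻¹ * g * sec φ rep hrep ((φ g)⁻¹ • j) ∈
      stab φ rep (orbitQuotMk 𝓑 φ j) := by
  have h1 : φ (sec φ rep hrep ((φ g)⁻¹ • j)) • rep (orbitQuotMk 𝓑 φ j) = (φ g)⁻¹ • j := by
    have := sec_spec φ rep hrep ((φ g)⁻¹ • j)
    rwa [mk_inv_smul] at this
  show φ _ • rep (orbitQuotMk 𝓑 φ j) = rep (orbitQuotMk 𝓑 φ j)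
  rw [map_mul, map_mul, map_inv, mul_smul, mul_smul, h1, smul_inv_smul,
    inv_smul_eq_iff, sec_spec]

/-- The key equivalence: cocycles for a fixed `φ` correspond to pairs of
a family of homomorphisms on stabilizers and a normalized function `𝓑 → A`. -/
noncomputable def cocEquiv :
    Coc A 𝓑 φ ≃ ((∀ ω, (stab φ rep ω →* A)) × {α : 𝓑 → A // ∀ ω, α (rep ω) = 1}) where
  toFun F :=
    ⟨fun ω =>
      { toFun := fun s => F.1 s (rep ω)
        map_one' := Coc.one φ F _
        map_mul' := fun s t => by
          have := F.2 s t (rep ω)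
          rwa [show (φ (s : G))⁻¹ • rep ω = rep ω from by
            rw [inv_smul_eq_iff]; exact s.2.symm] at this },
     ⟨fun j => F.1 (sec φ rep hrep j) j, fun ω => by
        show F.1 (sec φ rep hrep (rep ω)) (rep ω) = 1
        rw [sec_rep]; exact Coc.one φ F _⟩⟩
  invFun x :=
    ⟨fun g j => x.2.1 j * rhoHat φ rep x.1 (orbitQuotMk 𝓑 φ j)
        ((sec φ rep hrep j)⁻¹ * g * sec φ rep hrep ((φ g)⁻¹ • j)) *
        (x.2.1 ((φ g)⁻¹ • j))⁻¹,
     by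
      intro g h j
      obtain ⟨ρ, α, hα⟩ := x
      have hj'' : (φ h)⁻¹ • ((φ g)⁻¹ • j) = (φ (g * h))⁻¹ • j := by
        rw [map_mul, mul_inv_rev, mul_smul]
      have hmk : orbitQuotMk 𝓑 φ ((φ g)⁻¹ • j) = orbitQuotMk 𝓑 φ j := mk_inv_smul φ g j
      have m1 := mem_stab_aux φ rep hrep g j
      have m2 := mem_stab_aux φ rep hrep h ((φ g)⁻¹ • j)
      rw [hmk, hj''] at m2
      simp only [hj'', hmk]
      rw [show (sec φ rep hrep j)⁻¹ * (g * h) * sec φ rep hrep ((φ (g * h))⁻¹ • j) =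
        ((sec φ rep hrep j)⁻¹ * g * sec φ rep hrep ((φ g)⁻¹ • j)) *
        ((sec φ rep hrep ((φ g)⁻¹ • j))⁻¹ * h * sec φ rep hrep ((φ (g * h))⁻¹ • j)) from by
          group]
      rw [rhoHat_mul φ rep ρ _ m1 m2]
      group⟩
  left_inv F := by
    apply Subtype.ext
    funext g j
    simp only
    rw [rhoHat, dif_pos (mem_stab_aux φ rep hrep g j)]
    show F.1 (sec φ rep hrep j) j *
        F.1 ((sec φ rep hrep j)⁻¹ * g * sec φ rep hrep ((φ g)⁻¹ • j))
          (rep (orbitQuotMk 𝓑 φ j)) *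
        (F.1 (sec φ rep hrep ((φ g)⁻¹ • j)) ((φ g)⁻¹ • j))⁻¹ = F.1 g j
    set j' := (φ g)⁻¹ • j with hj'
    have step1 := F.2 (sec φ rep hrep j) ((sec φ rep hrep j)⁻¹ * g * sec φ rep hrep j') j
    rw [sec_spec' φ rep hrep j] at step1
    rw [← step1, show sec φ rep hrep j * ((sec φ rep hrep j)⁻¹ * g * sec φ rep hrep j') =
      g * sec φ rep hrep j' from by group, F.2 g (sec φ rep hrep j') j, ← hj']
    group
  right_inv x := by
    obtain ⟨ρ, α, hα⟩ := x
    refine Prod.ext ?_ ?_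
    · funext ω
      refine MonoidHom.ext fun s => ?_
      show α (rep ω) * rhoHat φ rep ρ (orbitQuotMk 𝓑 φ (rep ω))
          ((sec φ rep hrep (rep ω))⁻¹ * (s : G) * sec φ rep hrep ((φ (s : G))⁻¹ • rep ω)) *
          (α ((φ (s : G))⁻¹ • rep ω))⁻¹ = ρ ω s
      have hs : (φ (s : G))⁻¹ • rep ω = rep ω := by
        rw [inv_smul_eq_iff]; exact s.2.symm
      rw [hs, sec_rep, hα, hrep,
        show (1 : G)⁻¹ * (s : G) * 1 = (s : G) from by group,
        rhoHat, dif_pos s.2]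
      simp
    · refine Subtype.ext (funext fun j => ?_)
      show α j * rhoHat φ rep ρ (orbitQuotMk 𝓑 φ j)
          ((sec φ rep hrep j)⁻¹ * sec φ rep hrep j *
            sec φ rep hrep ((φ (sec φ rep hrep j))⁻¹ • j)) *
          (α ((φ (sec φ rep hrep j))⁻¹ • j))⁻¹ = α j
      rw [sec_spec' φ rep hrep j, sec_rep φ rep hrep,
        show (sec φ rep hrep j)⁻¹ * sec φ rep hrep j * 1 = 1 from by group,
        rhoHat_one, hα]
      group

end FixPhi

section Count

lemma card_sigma' {ι : Type*} [Fintype ι] (f : ι → Type*) [∀ i, Finite (f i)] :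
    Nat.card (Σ i, f i) = ∑ i, Nat.card (f i) := by
  letI : ∀ i, Fintype (f i) := fun i => Fintype.ofFinite _
  rw [Nat.card_eq_fintype_card, Fintype.card_sigma]
  simp [Nat.card_eq_fintype_card]

lemma card_compl_subtype {X : Type*} [Finite X] (p : X → Prop) :
    Nat.card {x // ¬ p x} = Nat.card X - Nat.card {x // p x} := by
  classical
  have := Nat.card_congr (Equiv.sumCompl p)
  rw [Nat.card_sum] at this
  omega

variable [Finite G] [Finite A] [Finite 𝓑]

instance (φ : G →* B) (ω : orbitQuot 𝓑 φ) (rep : orbitQuot 𝓑 φ → 𝓑) :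
    Finite (↥(stab φ rep ω) →* A) :=
  Finite.of_injective _ DFunLike.coe_injective

lemma card_coc (φ : G →* B) (rep : orbitQuot 𝓑 φ → 𝓑)
    (hrep : ∀ ω, orbitQuotMk 𝓑 φ (rep ω) = ω) :
    Nat.card (Coc A 𝓑 φ) =
      Nat.card A ^ (Nat.card 𝓑 - Nat.card (orbitQuot 𝓑 φ)) *
        ∏ᶠ ω : orbitQuot 𝓑 φ,
          Nat.card (↥((MulAction.stabilizer B (rep ω)).comap φ) →* A) := by
  classical
  letI := Fintype.ofFinite (orbitQuot 𝓑 φ)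
  rw [Nat.card_congr (cocEquiv φ rep hrep), Nat.card_prod, mul_comm]
  congr 1
  · -- card of the normalized functions
    have hinj : Function.Injective rep := fun a b h => by rw [← hrep a, ← hrep b, h]
    have e2 : {α : 𝓑 → A // ∀ ω, α (rep ω) = 1} ≃ ({j : 𝓑 // ¬ j ∈ Set.range rep} → A) :=
      { toFun := fun α j => α.1 j
        invFun := fun β => ⟨fun j => if h : j ∈ Set.range rep then 1 else β ⟨j, h⟩,
          fun ω => dif_pos ⟨ω, rfl⟩⟩
        left_inv := fun α => by
          apply Subtype.ext
          funext j
          by_cases h : j ∈ Set.range rep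
          · obtain ⟨ω, rfl⟩ := h
            simp [α.2 ω]
          · simp [h]
        right_inv := fun β => by
          funext j
          simp [j.2] }
    rw [Nat.card_congr e2, Nat.card_fun, card_compl_subtype]
    congr 2
    exact Nat.card_congr (Equiv.ofInjective rep hinj).symm
  · rw [Nat.card_pi, finprod_eq_prod_of_fintype]

end Count

end WreathCount

/-- For finite groups `G`, `A`, `B` with `B` acting on a finite set `𝓑`,
`|Hom(G, A ≀ B)| = Σ_{φ : G →* B} |A|^(|𝓑| - r(φ)) · Π_ω |Hom(φ⁻¹(Stab_B (rep φ ω)), A)|`,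
for any choice `rep` of orbit representatives (in particular the value of the right-hand
side does not depend on this choice). -/
theorem card_hom_wreathProduct
    {G A B 𝓑 : Type*} [Group G] [Group A] [Group B] [Finite G] [Finite A] [Finite B]
    [MulAction B 𝓑] [Finite 𝓑]
    (rep : ∀ φ : G →* B, orbitQuot 𝓑 φ → 𝓑)
    (hrep : ∀ (φ : G →* B) (ω : orbitQuot 𝓑 φ), orbitQuotMk 𝓑 φ (rep φ ω) = ω) :
    Nat.card (G →* WreathProduct A B 𝓑) =
      ∑ᶠ φ : G →* B,
        Nat.card A ^ (Nat.card 𝓑 - Nat.card (orbitQuot 𝓑 φ)) *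
          ∏ᶠ ω : orbitQuot 𝓑 φ,
            Nat.card (↥((MulAction.stabilizer B (rep φ ω)).comap φ) →* A) := by
  classical
  haveI : Finite (G →* B) := Finite.of_injective _ DFunLike.coe_injective
  letI := Fintype.ofFinite (G →* B)
  rw [Nat.card_congr WreathCount.homEquivSigma, WreathCount.card_sigma',
    finsum_eq_sum_of_fintype]
  exact Finset.sum_congr rfl fun φ _ => WreathCount.card_coc φ (rep φ) (hrep φ)
end

section
/- Let G be a finite group such that for every g ∈ G and every k coprime to |G|, the element g^k is conjugate to g in G. Then for every n, the wreath product G ≀ S_n, defined as the semidirect product (Fin n → G) ⋊ Perm(Fin n) where Perm(Fin n) acts on functions f : Fin n → G by (σ·f)(j) = f(σ⁻¹(j)), has the same property: for every element w of G ≀ S_n and every k coprime to the order of G ≀ S_n, the element w^k is conjugate to w in G ≀ S_n. -/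
namespace IsConjPowWreathAux

theorem wreathAut_apply {A B 𝓑 : Type*} [Group A] [Group B] [MulAction B 𝓑]
    (b : B) (f : 𝓑 → A) (j : 𝓑) :
    (wreathAut A B 𝓑 b f) j = f (b⁻¹ • j) := rfl

variable {G : Type*} [Group G] {α : Type*}

/-- partial products along an orbit: `R σ u a m = u(σ^m a) * u(σ^(m-1) a) * ⋯ * u(σ a)`. -/
def R (σ : Equiv.Perm α) (u : α → G) (a : α) : ℕ → G
  | 0 => 1
  | m+1 => u ((σ ^ (m+1)) a) * R σ u a m

theorem pow_apply_add_period {σ : Equiv.Perm α} {a : α} {L : ℕ} (hL : (σ ^ L) a = a) (s : ℕ) :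
    (σ ^ (s + L)) a = (σ ^ s) a := by
  rw [pow_add, Equiv.Perm.mul_apply, hL]

theorem R_add_period {σ : Equiv.Perm α} (u : α → G) {a : α} {L : ℕ} (hL : (σ ^ L) a = a)
    (s : ℕ) : R σ u a (s + L) = R σ u a s * R σ u a L := by
  induction s with
  | zero => simp [R]
  | succ s ih =>
    have e : s + 1 + L = (s + L) + 1 := by omega
    rw [e, R, ih, R]
    have e2 : s + L + 1 = (s + 1) + L := by omega
    rw [e2, pow_apply_add_period hL, mul_assoc]

theorem R_mul {σ : Equiv.Perm α} (u : α → G) {a : α} {L : ℕ} (hL : (σ ^ L) a = a)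
    (t : ℕ) : R σ u a (L * t) = (R σ u a L) ^ t := by
  induction t with
  | zero => simp [R]
  | succ t ih =>
    have e : L * (t + 1) = L * t + L := by ring
    rw [e, R_add_period u hL, ih, pow_succ]

/-- the left component of `(⟨f,σ⟩)^m`. -/
def Pf (σ : Equiv.Perm α) (f : α → G) : ℕ → (α → G)
  | 0 => 1
  | m+1 => Pf σ f m * fun j => f ((σ ^ m)⁻¹ j)

theorem Pf_R {σ : Equiv.Perm α} (f : α → G) (a : α) (i : ℕ) :
    ∀ s : ℕ, Pf σ f i ((σ ^ (s + i)) a) * R σ f a s = R σ f a (s + i) := by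
  induction i with
  | zero => intro s; simp [Pf]
  | succ i ih =>
    intro s
    have hx : ((σ ^ i)⁻¹ : Equiv.Perm α) ((σ ^ (s + (i+1))) a) = (σ ^ (s+1)) a := by
      have e : s + (i + 1) = i + (s + 1) := by omega
      rw [e, pow_add, Equiv.Perm.mul_apply]; exact Equiv.symm_apply_apply _ _
    have e3 : s + (i + 1) = (s + 1) + i := by omega
    calc Pf σ f (i+1) ((σ ^ (s + (i+1))) a) * R σ f a s
        = Pf σ f i ((σ ^ (s + (i+1))) a) * (f ((σ ^ (s+1)) a) * R σ f a s) := by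
          rw [Pf]; simp only [Pi.mul_apply]; rw [hx, mul_assoc]
      _ = Pf σ f i ((σ ^ ((s+1) + i)) a) * R σ f a (s+1) := by rw [e3]; rfl
      _ = R σ f a ((s+1) + i) := ih (s+1)
      _ = R σ f a (s + (i+1)) := by rw [← e3]

theorem pow_eq {n : ℕ} (σ : Equiv.Perm (Fin n)) (f : Fin n → G) (m : ℕ) :
    (SemidirectProduct.inl f * SemidirectProduct.inr σ
        : WreathProduct G (Equiv.Perm (Fin n)) (Fin n)) ^ m
      = SemidirectProduct.inl (Pf σ f m) * SemidirectProduct.inr (σ ^ m) := by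
  induction m with
  | zero => simp [Pf]
  | succ m ih =>
    have haut : (SemidirectProduct.inr (σ ^ m) * SemidirectProduct.inl f
        : WreathProduct G (Equiv.Perm (Fin n)) (Fin n))
        = SemidirectProduct.inl (wreathAut G (Equiv.Perm (Fin n)) (Fin n) (σ ^ m) f)
            * SemidirectProduct.inr (σ ^ m) := by
      rw [SemidirectProduct.inl_aut, mul_assoc, ← map_mul, inv_mul_cancel, map_one, mul_one]
    have hPf : Pf σ f m * wreathAut G (Equiv.Perm (Fin n)) (Fin n) (σ ^ m) f
        = Pf σ f (m+1) := rfl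
    rw [pow_succ, ih, mul_assoc, ← mul_assoc (SemidirectProduct.inr (σ ^ m)), haut]
    rw [← mul_assoc, ← mul_assoc, ← map_mul, hPf, mul_assoc, ← map_mul, ← pow_succ]

end IsConjPowWreathAux
open IsConjPowWreathAux SemidirectProduct in
/-- If in the finite group `G` every element is conjugate to its `k`-th
power for all `k` coprime to `|G|`, then the same holds in the wreath product
`G ≀ Sₙ = (Fin n → G) ⋊ Perm (Fin n)`. -/
theorem isConj_pow_wreath_symm
    {G : Type*} [Group G] [Finite G]
    (hG : ∀ (g : G) (k : ℕ), Nat.Coprime k (Nat.card G) → IsConj g (g ^ k))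
    (n : ℕ) (w : WreathProduct G (Equiv.Perm (Fin n)) (Fin n)) (k : ℕ)
    (hk : Nat.Coprime k (Nat.card (WreathProduct G (Equiv.Perm (Fin n)) (Fin n)))) :
    IsConj w (w ^ k) := by
  classical
  obtain ⟨f, σ⟩ := w
  rw [mk_eq_inl_mul_inr]
  -- coprimality facts
  have hkPerm : Nat.Coprime k (Nat.card (Equiv.Perm (Fin n))) :=
    hk.coprime_dvd_right (Subgroup.card_dvd_of_injective inr inr_injective)
  have hkG : Fin n → Nat.Coprime k (Nat.card G) := by
    intro a
    refine hk.coprime_dvd_right (dvd_trans ?_ (Subgroup.card_dvd_of_injective inl inl_injective))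
    exact Subgroup.card_dvd_of_surjective (Pi.evalMonoidHom (fun _ => G) a)
      (fun x => ⟨fun _ => x, rfl⟩)
  -- minimal periods
  let L : Fin n → ℕ := fun a => Function.minimalPeriod (⇑σ) a
  have hper : ∀ a : Fin n, (σ ^ (L a)) a = a := by
    intro a
    have := Function.iterate_minimalPeriod (f := ⇑σ) (x := a)
    rwa [← Equiv.Perm.coe_pow] at this
  have hordper : ∀ a : Fin n, Function.IsPeriodicPt (⇑σ) (orderOf σ) a := by
    intro a
    show (⇑σ)^[orderOf σ] a = a
    rw [← Equiv.Perm.coe_pow, pow_orderOf_eq_one]; rfl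
  have hLpos : ∀ a : Fin n, 0 < L a := fun a =>
    Function.minimalPeriod_pos_of_mem_periodicPts ⟨orderOf σ, orderOf_pos σ, hordper a⟩
  have hkL : ∀ a : Fin n, Nat.Coprime k (L a) := fun a =>
    hkPerm.coprime_dvd_right (dvd_trans (hordper a).minimalPeriod_dvd (orderOf_dvd_natCard σ))
  have hmodr : ∀ (a : Fin n) (s : ℕ), (σ ^ (s % L a)) a = (σ ^ s) a := by
    intro a s
    have := Function.iterate_mod_minimalPeriod_eq (f := ⇑σ) (x := a) (n := s)
    show (σ ^ (s % Function.minimalPeriod (⇑σ) a)) a = (σ ^ s) a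
    rw [Equiv.Perm.coe_pow, Equiv.Perm.coe_pow]
    exact this
  have hmod : ∀ (a : Fin n) (s t : ℕ), s ≡ t [MOD L a] → (σ ^ s) a = (σ ^ t) a := by
    intro a s t h
    rw [← hmodr a s, ← hmodr a t]
    show (σ ^ (s % L a)) a = (σ ^ (t % L a)) a
    rw [h]
  have hmod' : ∀ (a : Fin n) (s t : ℕ), (σ ^ s) a = (σ ^ t) a → s ≡ t [MOD L a] := by
    intro a s t h
    show s % L a = t % L a
    refine Function.iterate_injOn_Iio_minimalPeriod (f := ⇑σ) (x := a) ?_ ?_ ?_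
    · exact Set.mem_Iio.mpr (Nat.mod_lt _ (hLpos a))
    · exact Set.mem_Iio.mpr (Nat.mod_lt _ (hLpos a))
    · show (⇑σ)^[s % L a] a = (⇑σ)^[t % L a] a
      rw [← Equiv.Perm.coe_pow, ← Equiv.Perm.coe_pow, hmodr a s, hmodr a t]
      exact h
  -- base points of cycles
  let sc : Setoid (Fin n) :=
    ⟨σ.SameCycle, ⟨Equiv.Perm.SameCycle.refl σ, Equiv.Perm.SameCycle.symm,
      Equiv.Perm.SameCycle.trans⟩⟩
  let b : Fin n → Fin n := fun j => (@Quotient.mk _ sc j).out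
  have hb_same : ∀ j, σ.SameCycle (b j) j := fun j => @Quotient.mk_out _ sc j
  have hb_eq : ∀ {i j : Fin n}, σ.SameCycle i j → b i = b j := by
    intro i j h
    show (@Quotient.mk _ sc i).out = (@Quotient.mk _ sc j).out
    rw [Quotient.sound h]
  have hbb : ∀ j, b (b j) = b j := fun j => hb_eq (hb_same j)
  have hbs : ∀ j, b (σ j) = b j := fun j => (hb_eq ⟨1, by simp⟩).symm
  -- discrete log along cycles
  have hex : ∀ j, ∃ m : ℕ, (σ ^ m) (b j) = j := by
    intro j
    obtain ⟨i, _, hi⟩ := (hb_same j).exists_pow_eq'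
    exact ⟨i, hi⟩
  let m : Fin n → ℕ := fun j => Nat.find (hex j)
  have hm : ∀ j, (σ ^ (m j)) (b j) = j := fun j => Nat.find_spec (hex j)
  have hm_le : ∀ j (m' : ℕ), (σ ^ m') (b j) = j → m j ≤ m' := fun j m' h =>
    Nat.find_min' (hex j) h
  have hm_lt : ∀ j, m j < L (b j) := by
    intro j
    by_contra hcon
    push_neg at hcon
    have h1 : (σ ^ (m j % L (b j))) (b j) = j := by rw [hmodr]; exact hm j
    have h2 := hm_le j _ h1
    have h3 := Nat.mod_lt (m j) (hLpos (b j))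
    omega
  -- the permutation τ with τ σ τ⁻¹ = σ^k
  let t : Fin n → Fin n := fun j => (σ ^ (k * m j)) (b j)
  have ht_spec : ∀ j (m' : ℕ), (σ ^ m') (b j) = j → t j = (σ ^ (k * m')) (b j) := by
    intro j m' h'
    exact hmod _ _ _ (Nat.ModEq.mul_left k (hmod' _ _ _ ((hm j).trans h'.symm)))
  have hb_t : ∀ j, b (t j) = b j := by
    intro j
    have hsc : σ.SameCycle (b j) (t j) := ⟨(k * m j : ℕ), by rw [zpow_natCast]⟩
    have h := hb_eq hsc
    rw [hbb] at h
    exact h.symm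
  have htinj : Function.Injective t := by
    intro i j hij
    have hbij : b i = b j := by rw [← hb_t i, hij, hb_t j]
    have h1 : (σ ^ (k * m i)) (b i) = (σ ^ (k * m j)) (b i) := by
      show t i = (σ ^ (k * m j)) (b i)
      rw [hij, hbij]
    have h2 : m i ≡ m j [MOD L (b i)] :=
      Nat.ModEq.cancel_left_of_coprime (hkL (b i)).symm (hmod' _ _ _ h1)
    have hlt1 : m i < L (b i) := hm_lt i
    have hlt2 : m j < L (b i) := hbij ▸ hm_lt j
    have hmm : m i = m j := by
      have h3 : m i % L (b i) = m j % L (b i) := h2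
      rwa [Nat.mod_eq_of_lt hlt1, Nat.mod_eq_of_lt hlt2] at h3
    rw [← hm i, ← hm j, hbij, hmm]
  let τ : Equiv.Perm (Fin n) := Equiv.ofBijective t (Finite.injective_iff_bijective.mp htinj)
  have hτ : ∀ j, τ j = t j := fun j => rfl
  have hcomm : ∀ j, (σ ^ k) (τ j) = τ (σ j) := by
    intro j
    have h1 : (σ ^ (m j + 1)) (b (σ j)) = σ j := by
      rw [hbs, pow_succ', Equiv.Perm.mul_apply, hm]
    have h2 : τ (σ j) = (σ ^ (k * (m j + 1))) (b j) := by
      rw [hτ, ht_spec (σ j) (m j + 1) h1, hbs]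
    rw [h2, hτ]
    show (σ ^ k) ((σ ^ (k * m j)) (b j)) = _
    have e : k + k * m j = k * (m j + 1) := by ring
    rw [← Equiv.Perm.mul_apply, ← pow_add, e]
  have hτσ : τ⁻¹ * σ ^ k * τ = σ := by
    ext j
    rw [Equiv.Perm.mul_apply, Equiv.Perm.mul_apply, hcomm j]; exact congrArg Fin.val (Equiv.symm_apply_apply τ (σ j))
  -- cycle products and conjugators
  let F : Fin n → G := fun a => R σ f a (L a)
  let c : Fin n → G := fun a => Classical.choose (isConj_iff.mp (hG (F a) k (hkG a)))
  have hc : ∀ a, c a * F a * (c a)⁻¹ = F a ^ k := fun a =>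
    Classical.choose_spec (isConj_iff.mp (hG (F a) k (hkG a)))
  have hc' : ∀ a, c a * F a = F a ^ k * c a := by
    intro a
    have h := hc a
    rwa [mul_inv_eq_iff_eq_mul] at h
  -- the k-th power's left component, rewritten along cycles
  let P : Fin n → G := Pf σ f k
  let g : Fin n → G := fun j => P (τ j)
  have hg_eval : ∀ (a : Fin n), b a = a → ∀ mm : ℕ, g ((σ ^ mm) a) = P ((σ ^ (k * mm)) a) := by
    intro a ha mm
    have hsc : σ.SameCycle a ((σ ^ mm) a) := ⟨(mm : ℕ), by rw [zpow_natCast]⟩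
    have hba : b ((σ ^ mm) a) = a := (hb_eq hsc).symm.trans ha
    have h1 : (σ ^ mm) (b ((σ ^ mm) a)) = (σ ^ mm) a := by rw [hba]
    show P (τ ((σ ^ mm) a)) = P ((σ ^ (k * mm)) a)
    rw [hτ, ht_spec ((σ ^ mm) a) mm h1, hba]
  have hR_g : ∀ (a : Fin n), b a = a → ∀ mm : ℕ, R σ g a mm = R σ f a (k * mm) := by
    intro a ha mm
    induction mm with
    | zero => simp [R]
    | succ mm ih =>
      have h1 : R σ g a (mm + 1) = g ((σ ^ (mm + 1)) a) * R σ g a mm := rfl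
      rw [h1, ih, hg_eval a ha (mm + 1)]
      have h2 : k * (mm + 1) = k * mm + k := by ring
      rw [h2, ← Pf_R f a k (k * mm)]
  have hRgL : ∀ (a : Fin n), b a = a → R σ g a (L a) = F a ^ k := by
    intro a ha
    rw [hR_g a ha (L a)]
    show R σ f a (k * L a) = (R σ f a (L a)) ^ k
    rw [mul_comm k (L a), R_mul f (hper a)]
  -- the conjugating function h in G^n
  let h : Fin n → G := fun j => R σ g (b j) (m j) * c (b j) * (R σ f (b j) (m j))⁻¹
  have hstep : ∀ j (s : ℕ),
      R σ g (b j) (s + L (b j)) * c (b j) * (R σ f (b j) (s + L (b j)))⁻¹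
        = R σ g (b j) s * c (b j) * (R σ f (b j) s)⁻¹ := by
    intro j s
    have hLb : (σ ^ (L (b j))) (b j) = b j := hper (b j)
    rw [R_add_period g hLb, R_add_period f hLb]
    have key : R σ g (b j) (L (b j)) * c (b j) = c (b j) * R σ f (b j) (L (b j)) := by
      rw [hRgL (b j) (hbb j), ← hc' (b j)]
    rw [mul_inv_rev, mul_assoc (R σ g (b j) s), key]
    group
  have hh_spec : ∀ j (mm : ℕ), (σ ^ mm) (b j) = j →
      h j = R σ g (b j) mm * c (b j) * (R σ f (b j) mm)⁻¹ := by
    intro j mm hmm'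
    have hgen : ∀ tt : ℕ, h j
        = R σ g (b j) (m j + L (b j) * tt) * c (b j) * (R σ f (b j) (m j + L (b j) * tt))⁻¹ := by
      intro tt
      induction tt with
      | zero => simp only [Nat.mul_zero, Nat.add_zero]; rfl
      | succ tt ih =>
        have e : m j + L (b j) * (tt + 1) = (m j + L (b j) * tt) + L (b j) := by ring
        rw [e, hstep j]
        exact ih
    have hle : m j ≤ mm := hm_le j mm hmm'
    have hmodv : m j ≡ mm [MOD L (b j)] := hmod' _ _ _ ((hm j).trans hmm'.symm)
    obtain ⟨tt, htt⟩ := (Nat.modEq_iff_dvd' hle).mp hmodv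
    have hmmeq : mm = m j + L (b j) * tt :=
      ((Nat.sub_eq_iff_eq_add hle).mp htt).trans (add_comm _ _)
    rw [hmmeq]
    exact hgen tt
  have hcond : ∀ j, h (σ j) * f (σ j) = g (σ j) * h j := by
    intro j
    have hbσ : b (σ j) = b j := hbs j
    have hsj : (σ ^ (m j + 1)) (b j) = σ j := by
      rw [pow_succ', Equiv.Perm.mul_apply, hm]
    have h1 : (σ ^ (m j + 1)) (b (σ j)) = σ j := by rw [hbσ]; exact hsj
    have h2 := hh_spec (σ j) (m j + 1) h1
    rw [hbσ] at h2
    have hRg : R σ g (b j) (m j + 1) = g (σ j) * R σ g (b j) (m j) := by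
      show g ((σ ^ (m j + 1)) (b j)) * R σ g (b j) (m j) = _
      rw [hsj]
    have hRf : R σ f (b j) (m j + 1) = f (σ j) * R σ f (b j) (m j) := by
      show f ((σ ^ (m j + 1)) (b j)) * R σ f (b j) (m j) = _
      rw [hsj]
    rw [h2, hRg, hRf]
    show _ = g (σ j) * (R σ g (b j) (m j) * c (b j) * (R σ f (b j) (m j))⁻¹)
    group
  -- assembling the conjugation
  have hwk : (inl f * inr σ : WreathProduct G (Equiv.Perm (Fin n)) (Fin n)) ^ k
      = inl P * inr (σ ^ k) := pow_eq σ f k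
  refine isConj_iff.mpr ⟨inr τ * inl h, ?_⟩
  rw [hwk]
  have hauto : ∀ (ρ : Equiv.Perm (Fin n)) (u : Fin n → G),
      (inr ρ * inl u : WreathProduct G (Equiv.Perm (Fin n)) (Fin n))
        = inl (wreathAut G (Equiv.Perm (Fin n)) (Fin n) ρ u) * inr ρ := by
    intro ρ u
    rw [SemidirectProduct.inl_aut, mul_assoc, ← map_mul, inv_mul_cancel, map_one, mul_one]
  have step1 : (inl h : WreathProduct G (Equiv.Perm (Fin n)) (Fin n))
      * (inl f * inr σ) * (inl h)⁻¹ = inl g * inr σ := by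
    have hfun : h * f * (wreathAut G (Equiv.Perm (Fin n)) (Fin n) σ (h⁻¹)) = g := by
      funext j
      have hcj := hcond (σ⁻¹ j)
      rw [show σ (σ⁻¹ j) = j from Equiv.apply_symm_apply σ j] at hcj
      show h j * f j * (h (σ⁻¹ • j))⁻¹ = g j
      show h j * f j * (h (σ⁻¹ j))⁻¹ = g j
      rw [hcj, mul_inv_cancel_right]
    calc (inl h : WreathProduct G (Equiv.Perm (Fin n)) (Fin n)) * (inl f * inr σ) * (inl h)⁻¹
        = inl (h * f) * (inr σ * inl h⁻¹) := by
          rw [map_mul, map_inv]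
          group
      _ = inl (h * f) * (inl (wreathAut G (Equiv.Perm (Fin n)) (Fin n) σ (h⁻¹)) * inr σ) := by
          rw [hauto]
      _ = inl (h * f * wreathAut G (Equiv.Perm (Fin n)) (Fin n) σ (h⁻¹)) * inr σ := by
          rw [← mul_assoc, ← map_mul]
      _ = inl g * inr σ := by rw [hfun]
  have step2 : (inr τ : WreathProduct G (Equiv.Perm (Fin n)) (Fin n))
      * (inl g * inr σ) * (inr τ)⁻¹ = inl P * inr (σ ^ k) := by
    have hgP : wreathAut G (Equiv.Perm (Fin n)) (Fin n) τ g = P := by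
      funext j
      show g (τ⁻¹ • j) = P j
      show P (τ (τ⁻¹ j)) = P j
      exact congrArg P (Equiv.apply_symm_apply τ j)
    have hττ : τ * σ * τ⁻¹ = σ ^ k := by
      nth_rewrite 1 [← hτσ]
      group
    calc (inr τ : WreathProduct G (Equiv.Perm (Fin n)) (Fin n)) * (inl g * inr σ) * (inr τ)⁻¹
        = (inr τ * inl g) * (inr σ * (inr τ)⁻¹) := by group
      _ = inl (wreathAut G (Equiv.Perm (Fin n)) (Fin n) τ g) * inr τ * (inr σ * (inr τ)⁻¹) := by
          rw [hauto]
      _ = inl (wreathAut G (Equiv.Perm (Fin n)) (Fin n) τ g) * inr (τ * σ * τ⁻¹) := by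
          rw [map_mul, map_mul, map_inv]
          group
      _ = inl P * inr (σ ^ k) := by rw [hgP, hττ]
  calc (inr τ * inl h) * (inl f * inr σ) * (inr τ * inl h)⁻¹
      = inr τ * (inl h * (inl f * inr σ) * (inl h)⁻¹) * (inr τ)⁻¹ := by group
    _ = inl P * inr (σ ^ k) := by rw [step1, step2]
end

section
/- For every n, every Sylow 2-subgroup P of the symmetric group Perm(Fin n), every element g ∈ P, and every odd natural number k, the element g^k is conjugate to g within P (i.e., there exists h ∈ P with h g h⁻¹ = g^k). -/
open Equiv Subgroup

/-- rationality property of a subgroup -/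
def RP {G : Type*} [Group G] (Q : Subgroup G) : Prop :=
  ∀ g ∈ Q, ∀ k : ℕ, Odd k → ∃ h ∈ Q, h * g * h⁻¹ = g ^ k

lemma RP_bot {G : Type*} [Group G] : RP (⊥ : Subgroup G) := by
  intro g hg k hk
  rw [Subgroup.mem_bot] at hg
  exact ⟨1, Subgroup.one_mem _, by simp [hg]⟩

lemma RP_map {G H : Type*} [Group G] [Group H] (f : G →* H) {Q : Subgroup G}
    (h : RP Q) : RP (Q.map f) := by
  rintro g ⟨g₀, hg₀, rfl⟩ k hk
  obtain ⟨h₀, hh₀, hc⟩ := h g₀ hg₀ k hk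
  exact ⟨f h₀, Subgroup.mem_map_of_mem f hh₀, by
    rw [← map_inv, ← map_mul, ← map_mul, hc, map_pow]⟩

lemma RP_prod {G H : Type*} [Group G] [Group H] {Q₁ : Subgroup G} {Q₂ : Subgroup H}
    (h₁ : RP Q₁) (h₂ : RP Q₂) : RP (Q₁.prod Q₂) := by
  rintro ⟨g₁, g₂⟩ hg k hk
  rw [Subgroup.mem_prod] at hg
  obtain ⟨x₁, hx₁, hc₁⟩ := h₁ g₁ hg.1 k hk
  obtain ⟨x₂, hx₂, hc₂⟩ := h₂ g₂ hg.2 k hk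
  refine ⟨(x₁, x₂), Subgroup.mem_prod.2 ⟨hx₁, hx₂⟩, ?_⟩
  ext <;> simp [hc₁, hc₂]


section Wreath

variable {α : Type*}

private abbrev sw (α : Type*) : Equiv.Perm (α ⊕ α) := Equiv.sumComm α α

lemma sw_mul_sw : sw α * sw α = 1 := by
  ext x; cases x <;> simp [sw, Equiv.Perm.mul_apply]

lemma sw_inv : (sw α)⁻¹ = sw α := by
  rw [inv_eq_iff_mul_eq_one, sw_mul_sw]

lemma sw_mul_sumCongr (a b : Equiv.Perm α) :
    sw α * Equiv.Perm.sumCongr a b = Equiv.Perm.sumCongr b a * sw α := by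
  ext x; cases x <;> simp [sw, Equiv.Perm.mul_apply]

lemma sumCongr_pow (a b : Equiv.Perm α) (k : ℕ) :
    (Equiv.Perm.sumCongr a b) ^ k = Equiv.Perm.sumCongr (a ^ k) (b ^ k) := by
  induction k with
  | zero => simp
  | succ k ih => rw [pow_succ, pow_succ, pow_succ, ih, Equiv.Perm.sumCongr_mul]

/-- the wreath product `Q ≀ C2` inside `Perm (α ⊕ α)` -/
def wreath (Q : Subgroup (Equiv.Perm α)) : Subgroup (Equiv.Perm (α ⊕ α)) where
  carrier := {σ | ∃ a ∈ Q, ∃ b ∈ Q,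
    σ = Equiv.Perm.sumCongr a b ∨ σ = Equiv.Perm.sumCongr a b * sw α}
  one_mem' := ⟨1, Q.one_mem, 1, Q.one_mem, Or.inl Equiv.Perm.sumCongr_one.symm⟩
  mul_mem' := by
    rintro σ τ ⟨a, ha, b, hb, (rfl | rfl)⟩ ⟨c, hc, d, hd, (rfl | rfl)⟩
    · exact ⟨a * c, Q.mul_mem ha hc, b * d, Q.mul_mem hb hd,
        Or.inl (by rw [Equiv.Perm.sumCongr_mul])⟩
    · exact ⟨a * c, Q.mul_mem ha hc, b * d, Q.mul_mem hb hd,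
        Or.inr (by rw [← mul_assoc, Equiv.Perm.sumCongr_mul])⟩
    · refine ⟨a * d, Q.mul_mem ha hd, b * c, Q.mul_mem hb hc, Or.inr ?_⟩
      rw [mul_assoc, sw_mul_sumCongr, ← mul_assoc, Equiv.Perm.sumCongr_mul]
    · refine ⟨a * d, Q.mul_mem ha hd, b * c, Q.mul_mem hb hc, Or.inl ?_⟩
      rw [mul_assoc, ← mul_assoc (sw α), sw_mul_sumCongr, mul_assoc, sw_mul_sw, mul_one,
        Equiv.Perm.sumCongr_mul]
  inv_mem' := by
    rintro σ ⟨a, ha, b, hb, (rfl | rfl)⟩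
    · exact ⟨a⁻¹, Q.inv_mem ha, b⁻¹, Q.inv_mem hb, Or.inl (by rw [Equiv.Perm.sumCongr_inv])⟩
    · refine ⟨b⁻¹, Q.inv_mem hb, a⁻¹, Q.inv_mem ha, Or.inr ?_⟩
      rw [mul_inv_rev, sw_inv, Equiv.Perm.sumCongr_inv, sw_mul_sumCongr]

lemma mem_wreath {Q : Subgroup (Equiv.Perm α)} {σ : Equiv.Perm (α ⊕ α)} :
    σ ∈ wreath Q ↔ ∃ a ∈ Q, ∃ b ∈ Q,
      σ = Equiv.Perm.sumCongr a b ∨ σ = Equiv.Perm.sumCongr a b * sw α := Iff.rfl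

lemma wreath_sq (a b : Equiv.Perm α) :
    (Equiv.Perm.sumCongr a b * sw α) ^ 2 = Equiv.Perm.sumCongr (a * b) (b * a) := by
  rw [pow_two]
  rw [mul_assoc, ← mul_assoc (sw α), sw_mul_sumCongr, mul_assoc, sw_mul_sw, mul_one,
    Equiv.Perm.sumCongr_mul]

lemma wreath_pow (a b : Equiv.Perm α) (j : ℕ) :
    (Equiv.Perm.sumCongr a b * sw α) ^ (2 * j + 1)
      = Equiv.Perm.sumCongr ((a * b) ^ j * a) ((b * a) ^ j * b) * sw α := by
  induction j with
  | zero => simp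
  | succ j ih =>
      have h : 2 * (j + 1) + 1 = (2 * j + 1) + 2 := by ring
      rw [h, pow_add, ih, wreath_sq]
      rw [mul_assoc, sw_mul_sumCongr, ← mul_assoc, Equiv.Perm.sumCongr_mul]
      congr 1
      · congr 1 <;> rw [pow_succ] <;> simp [mul_assoc]

end Wreath

section Wreath2
variable {α : Type*}

lemma mul_pow_comm_aux (a b : Equiv.Perm α) (j : ℕ) :
    a * (b * a) ^ j = (a * b) ^ j * a := by
  induction j with
  | zero => simp
  | succ j ih =>
      rw [pow_succ, pow_succ, ← mul_assoc, ih]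
      simp [mul_assoc]

lemma RP_wreath {Q : Subgroup (Equiv.Perm α)} (hQ : RP Q) : RP (wreath Q) := by
  rintro g ⟨a, ha, b, hb, (rfl | rfl)⟩ k hk
  · obtain ⟨x, hx, hxa⟩ := hQ a ha k hk
    obtain ⟨y, hy, hyb⟩ := hQ b hb k hk
    refine ⟨Equiv.Perm.sumCongr x y, ⟨x, hx, y, hy, Or.inl rfl⟩, ?_⟩
    rw [Equiv.Perm.sumCongr_inv, Equiv.Perm.sumCongr_mul, Equiv.Perm.sumCongr_mul,
      sumCongr_pow, hxa, hyb]
  · obtain ⟨j, rfl⟩ := hk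
    obtain ⟨z, hz, hzc⟩ := hQ (a * b) (Q.mul_mem ha hb) (2 * j + 1) ⟨j, rfl⟩
    refine ⟨Equiv.Perm.sumCongr z (a⁻¹ * ((a * b) ^ j)⁻¹ * z * a),
      ⟨z, hz, _, Q.mul_mem (Q.mul_mem (Q.mul_mem (Q.inv_mem ha)
        (Q.inv_mem (Q.pow_mem (Q.mul_mem ha hb) j))) hz) ha, Or.inl rfl⟩, ?_⟩
    rw [wreath_pow, Equiv.Perm.sumCongr_inv, ← mul_assoc, mul_assoc _ (sw α) _,
      sw_mul_sumCongr, ← mul_assoc, Equiv.Perm.sumCongr_mul, Equiv.Perm.sumCongr_mul]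
    congr 2
    · group
    · have h1 : a⁻¹ * ((a * b) ^ j)⁻¹ * z * a * b * z⁻¹
          = a⁻¹ * ((a * b) ^ j)⁻¹ * (z * (a * b) * z⁻¹) := by
        simp [mul_assoc]
      rw [h1, hzc, show 2 * j + 1 = j + (j + 1) by ring, pow_add]
      rw [show (b * a) ^ j * b = a⁻¹ * (a * (b * a) ^ j) * b by group,
        mul_pow_comm_aux]
      rw [pow_succ]
      group

end Wreath2

section Cards
variable {α : Type*}

lemma card_wreath [Nonempty α] (Q : Subgroup (Equiv.Perm α)) :
    Nat.card (wreath Q) = 2 * (Nat.card Q * Nat.card Q) := by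
  classical
  have hf : ∀ p : Q × Q × Bool, (if p.2.2 then
      Equiv.Perm.sumCongr (p.1 : Equiv.Perm α) (p.2.1 : Equiv.Perm α) * sw α
      else Equiv.Perm.sumCongr (p.1 : Equiv.Perm α) (p.2.1 : Equiv.Perm α)) ∈ wreath Q := by
    rintro ⟨a, b, (_|_)⟩
    · exact ⟨a, a.2, b, b.2, Or.inl rfl⟩
    · exact ⟨a, a.2, b, b.2, Or.inr rfl⟩
  let f : Q × Q × Bool → wreath Q := fun p => ⟨_, hf p⟩
  have hbij : Function.Bijective f := by
    constructor
    · rintro ⟨a, b, ε⟩ ⟨c, d, δ⟩ h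
      rw [Subtype.ext_iff] at h
      obtain x0 := Classical.arbitrary α
      have hed : ε = δ := by
        by_contra hne
        rcases Bool.eq_false_or_eq_true ε with hε | hε <;>
          rcases Bool.eq_false_or_eq_true δ with hδ | hδ <;>
            subst hε <;> subst hδ <;> simp only [f, Bool.false_eq_true, if_true, if_false] at h hne
        · simp at hne
        · have := Equiv.congr_fun h (Sum.inl x0)
          simp [Equiv.Perm.mul_apply, sw] at this
        · have := Equiv.congr_fun h (Sum.inl x0)
          simp [Equiv.Perm.mul_apply, sw] at this
        · simp at hne
      subst hed
      have hsc : Equiv.Perm.sumCongr (a : Equiv.Perm α) (b : Equiv.Perm α)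
          = Equiv.Perm.sumCongr (c : Equiv.Perm α) (d : Equiv.Perm α) := by
        rcases Bool.eq_false_or_eq_true ε with hε | hε <;> subst hε <;>
          simp only [f, Bool.false_eq_true, if_true, if_false] at h
        · exact mul_right_cancel h
        · exact h
      have := Equiv.Perm.sumCongrHom_injective (α := α) (β := α)
        (by simpa [Equiv.Perm.sumCongrHom] using hsc :
          Equiv.Perm.sumCongrHom α α ((a : Equiv.Perm α), (b : Equiv.Perm α))
            = Equiv.Perm.sumCongrHom α α ((c : Equiv.Perm α), (d : Equiv.Perm α)))
      rw [Prod.ext_iff] at this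
      simp only [Prod.mk.injEq]
      exact ⟨Subtype.ext this.1, Subtype.ext this.2, trivial⟩
    · rintro ⟨σ, a, ha, b, hb, (rfl | rfl)⟩
      · exact ⟨(⟨a, ha⟩, ⟨b, hb⟩, false), rfl⟩
      · exact ⟨(⟨a, ha⟩, ⟨b, hb⟩, true), rfl⟩
  have := Nat.card_eq_of_bijective f hbij
  simp only [Nat.card_prod, Nat.card_eq_fintype_card (α := Bool), Fintype.card_bool] at this
  rw [← this]; ring

/-- `permCongr` as a `MulEquiv`. -/
def permCongrHom {α β : Type*} (e : α ≃ β) : Equiv.Perm α ≃* Equiv.Perm β :=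
  { Equiv.permCongr e with
    map_mul' := fun p q => by
      ext x
      simp [Equiv.permCongr_apply, Equiv.Perm.mul_apply] }

lemma card_map_equiv {G H : Type*} [Group G] [Group H] (e : G ≃* H) (Q : Subgroup G) :
    Nat.card (Q.map e.toMonoidHom) = Nat.card Q :=
  (Nat.card_congr (Subgroup.equivMapOfInjective Q e.toMonoidHom e.injective).toEquiv).symm

lemma card_map_sumCongrHom {β : Type*} (Q₁ : Subgroup (Equiv.Perm α))
    (Q₂ : Subgroup (Equiv.Perm β)) :
    Nat.card ((Q₁.prod Q₂).map (Equiv.Perm.sumCongrHom α β))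
      = Nat.card Q₁ * Nat.card Q₂ := by
  rw [← Nat.card_congr (Subgroup.equivMapOfInjective _ _
    Equiv.Perm.sumCongrHom_injective).toEquiv,
    Nat.card_congr (Subgroup.prodEquiv Q₁ Q₂).toEquiv, Nat.card_prod]

end Cards

section Arith
open Nat

lemma padic_two_pow_factorial (i : ℕ) : padicValNat 2 ((2 ^ i)!) = 2 ^ i - 1 := by
  induction i with
  | zero => simp
  | succ i ih =>
      have h2 : (2:ℕ) ^ (i + 1) = 2 * 2 ^ i := by ring
      have h1 : 1 ≤ (2:ℕ) ^ i := Nat.one_le_two_pow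
      rw [h2, padicValNat_factorial_mul, ih]
      omega

lemma padic_factorial_add (j m : ℕ) (hm : 0 < m) (h : m < 2 ^ j) :
    padicValNat 2 ((2 ^ j + m)!) = padicValNat 2 ((2 ^ j)!) + padicValNat 2 (m !) := by
  have h2 : (2:ℕ) ^ (j + 1) = 2 ^ j + 2 ^ j := by ring
  have hlog1 : Nat.log 2 (2 ^ j + m) < j + 1 :=
    Nat.log_lt_of_lt_pow (by positivity) (by omega)
  have hlog2 : Nat.log 2 (2 ^ j) < j + 1 :=
    Nat.log_lt_of_lt_pow (by positivity) (by omega)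
  have hlog3 : Nat.log 2 m < j + 1 :=
    Nat.log_lt_of_lt_pow hm.ne' (by omega)
  rw [padicValNat_factorial hlog1, padicValNat_factorial hlog2, padicValNat_factorial hlog3,
    ← Finset.sum_add_distrib]
  refine Finset.sum_congr rfl fun i hi => ?_
  rw [Finset.mem_Ico] at hi
  have hkey : (2:ℕ) ^ j = 2 ^ i * 2 ^ (j - i) := by
    rw [← pow_add]; congr 1; omega
  rw [hkey, Nat.mul_add_div (by positivity), Nat.mul_div_cancel_left _ (by positivity)]

end Arith

open Nat in
lemma exists_RP_sylow_card (n : ℕ) : ∃ Q : Subgroup (Equiv.Perm (Fin n)),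
    RP Q ∧ Nat.card Q = 2 ^ padicValNat 2 (n !) := by
  induction n using Nat.strong_induction_on with
  | _ n ih =>
  rcases Nat.lt_or_ge n 2 with hn | hn
  · refine ⟨⊥, RP_bot, ?_⟩
    interval_cases n <;> simp [Nat.factorial]
  · have hn0 : n ≠ 0 := by omega
    have hjn : 2 ^ Nat.log 2 n ≤ n := Nat.pow_log_le_self 2 hn0
    have hjn' : n < 2 ^ (Nat.log 2 n + 1) := Nat.lt_pow_succ_log_self (by norm_num) n
    set j := Nat.log 2 n with hj
    have hj1 : 1 ≤ j := by
      rw [hj, Nat.le_log_iff_pow_le (by norm_num) hn0]; omega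
    have h2j : (2:ℕ) ^ (j - 1) * 2 = 2 ^ j := by
      rw [← pow_succ]; congr 1; omega
    rcases Nat.eq_zero_or_pos (n - 2 ^ j) with hm | hm
    · -- n = 2 ^ j
      have hne : n = 2 * 2 ^ (j - 1) := by omega
      obtain ⟨Q', hQ'RP, hQ'card⟩ := ih (2 ^ (j - 1)) (by omega)
      haveI : Nonempty (Fin (2 ^ (j - 1))) := ⟨⟨0, by positivity⟩⟩
      let e : (Fin (2 ^ (j - 1)) ⊕ Fin (2 ^ (j - 1))) ≃ Fin n :=
        finSumFinEquiv.trans (finCongr (by omega))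
      refine ⟨(wreath Q').map (_root_.permCongrHom e).toMonoidHom,
        RP_map _ (RP_wreath hQ'RP), ?_⟩
      rw [card_map_equiv, card_wreath, hQ'card, padic_two_pow_factorial,
        hne, padicValNat_factorial_mul, padic_two_pow_factorial]
      have h1 : 1 ≤ (2:ℕ) ^ (j - 1) := Nat.one_le_two_pow
      rw [← pow_add, ← pow_succ']
      congr 1
      omega
    · -- n = 2 ^ j + m with 0 < m < 2 ^ j
      obtain ⟨Q₁, h1RP, h1card⟩ := ih (2 ^ j) (by omega)
      obtain ⟨Q₂, h2RP, h2card⟩ := ih (n - 2 ^ j) (by omega)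
      let e : (Fin (2 ^ j) ⊕ Fin (n - 2 ^ j)) ≃ Fin n :=
        finSumFinEquiv.trans (finCongr (by omega))
      refine ⟨(((Q₁.prod Q₂).map (Equiv.Perm.sumCongrHom _ _)).map
          (_root_.permCongrHom e).toMonoidHom),
        RP_map _ (RP_map _ (RP_prod h1RP h2RP)), ?_⟩
      rw [card_map_equiv, card_map_sumCongrHom, h1card, h2card, ← pow_add]
      congr 1
      have h' := padic_factorial_add j (n - 2 ^ j) hm (by omega)
      rw [show (2:ℕ) ^ j + (n - 2 ^ j) = n from by omega] at h'
      rw [h']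

/-- In every Sylow 2-subgroup `P` of the symmetric group `Perm (Fin n)`,
every element `g ∈ P` is conjugate within `P` to `g ^ k` for every odd natural `k`. -/
theorem sylow_two_symm_conj_odd_pow
    (n : ℕ) (P : Sylow 2 (Equiv.Perm (Fin n))) (g : Equiv.Perm (Fin n)) (hg : g ∈ P)
    (k : ℕ) (hk : Odd k) :
    ∃ h ∈ (P : Subgroup (Equiv.Perm (Fin n))), h * g * h⁻¹ = g ^ k := by
  classical
  obtain ⟨Q, hQRP, hQcard⟩ := exists_RP_sylow_card n
  have hcard' : Nat.card Q = 2 ^ (Nat.card (Equiv.Perm (Fin n))).factorization 2 := by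
    rw [show Nat.card (Equiv.Perm (Fin n)) = Nat.factorial n by
        rw [Nat.card_eq_fintype_card, Fintype.card_perm, Fintype.card_fin],
      Nat.factorization_def _ Nat.prime_two]
    exact hQcard
  let Qs : Sylow 2 (Equiv.Perm (Fin n)) := Sylow.ofCard Q hcard'
  haveI : Finite (Sylow 2 (Equiv.Perm (Fin n))) :=
    Finite.of_injective (fun S : Sylow 2 (Equiv.Perm (Fin n)) => (S : Set (Equiv.Perm (Fin n))))
      (fun _ _ h => by ext x; exact Set.ext_iff.mp h x)
  obtain ⟨x, hx⟩ := MulAction.exists_smul_eq (Equiv.Perm (Fin n)) Qs P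
  have hP : (P : Subgroup (Equiv.Perm (Fin n)))
      = Q.map (MulDistribMulAction.toMonoidEnd (MulAut (Equiv.Perm (Fin n))) _
          (MulAut.conj x)) := by
    rw [← hx, Sylow.coe_subgroup_smul, Subgroup.pointwise_smul_def]
    rfl
  rw [hP]
  exact RP_map _ hQRP g (hP ▸ hg) k hk
end

section
/- For every n and every Sylow 2-subgroup P of the symmetric group Perm(Fin n), every complex character of P is rational-valued; that is, for every finite-dimensional complex representation V of P and every g ∈ P, the trace of the action of g on V is a rational number. -/
set_option maxHeartbeats 1000000

open Equiv Finset Nat LinearMap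

/-- A group in which every element is conjugate to all its odd powers. -/
def IsOddRat (G : Type*) [Group G] : Prop :=
  ∀ g : G, ∀ m : ℕ, Odd m → ∃ x : G, x * g * x⁻¹ = g ^ m


theorem trace_rat_of_oddRat {G : Type*} [Group G]
    (hG : ∀ g : G, ∃ k : ℕ, orderOf g = 2 ^ k) (hrat : IsOddRat G)
    {V : Type*} [AddCommGroup V] [Module ℂ V] [FiniteDimensional ℂ V]
    (ρ : Representation ℂ G V) (g : G) :
    ∃ q : ℚ, LinearMap.trace ℂ V (ρ g) = (q : ℂ) := by
  obtain ⟨k, hk⟩ := hG g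
  set f := ρ g with hf
  have hfN : f ^ (2 ^ k) = 1 := by
    rw [hf, ← map_pow, ← hk, pow_orderOf_eq_one, map_one]
  have htr : ∀ m : ℕ, Odd m → trace ℂ V (f ^ m) = trace ℂ V f := by
    intro m hm
    obtain ⟨x, hx⟩ := hrat g m hm
    have h1 : f ^ m = ρ x * (f * ρ x⁻¹) := by
      rw [hf, ← map_pow, ← hx]; simp [map_mul, mul_assoc]
    rw [h1, trace_mul_comm, mul_assoc, ← map_mul, inv_mul_cancel, map_one, mul_one]
  rcases Nat.eq_zero_or_pos k with hk0 | hkpos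
  · subst hk0
    have : g = 1 := orderOf_eq_one_iff.mp (by simpa using hk)
    refine ⟨Module.finrank ℂ V, ?_⟩
    rw [hf, this, map_one, trace_one]
    norm_num
  -- main case
  set M : ℕ := 2 ^ (k - 1) with hM
  have hMpos : 0 < M := Nat.pow_pos (by norm_num)
  have hMC : (M : ℂ) ≠ 0 := Nat.cast_ne_zero.mpr hMpos.ne'
  have h2M : 2 * M = 2 ^ k := by
    rw [hM, ← _root_.pow_succ']
    congr 1
    omega
  set S : Module.End ℂ V := ∑ j ∈ range M, f ^ (2 * j) with hS
  have hf2S : f ^ 2 * S = S := by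
    have e1 : f ^ 2 * S = ∑ j ∈ range M, f ^ (2 * (j + 1)) := by
      rw [hS, Finset.mul_sum]
      refine Finset.sum_congr rfl fun j _ => ?_
      rw [← pow_add]; ring_nf
    have e2 : (∑ j ∈ range M, f ^ (2 * (j + 1))) + f ^ (2 * 0) =
        ∑ j ∈ range (M + 1), f ^ (2 * j) :=
      (Finset.sum_range_succ' (fun j => f ^ (2 * j)) M).symm
    have e3 : ∑ j ∈ range (M + 1), f ^ (2 * j) = S + f ^ (2 * M) :=
      Finset.sum_range_succ (fun j => f ^ (2 * j)) M
    have e4 : f ^ (2 * M) = 1 := by rw [h2M, hfN]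
    have e5 : f ^ (2 * 0) = 1 := by norm_num
    rw [e1]
    have h := e2.trans e3
    rw [e4, e5] at h
    exact add_right_cancel h
  have hpowS : ∀ j : ℕ, f ^ (2 * j) * S = S := by
    intro j
    induction j with
    | zero => simp
    | succ j ih =>
      have h1 : f ^ (2 * (j + 1)) = f ^ (2 * j) * f ^ 2 := by rw [← pow_add]; ring_nf
      rw [h1, mul_assoc, hf2S, ih]
  have hSS : S * S = (M : ℂ) • S := by
    rw [hS, Finset.sum_mul]
    have h : ∀ j ∈ range M, f ^ (2 * j) * S = S := fun j _ => hpowS j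
    rw [Finset.sum_congr rfl h, Finset.sum_const, card_range]
    simp [Nat.cast_smul_eq_nsmul]
    rfl
  have hSf : S * f = f * S := by
    rw [hS, Finset.sum_mul, Finset.mul_sum]
    refine Finset.sum_congr rfl fun j _ => ?_
    rw [← _root_.pow_succ, ← _root_.pow_succ']
  have hA2' : (f * S) * (f * S) = (M : ℂ) • S := by
    rw [mul_assoc, ← mul_assoc S f S, hSf, mul_assoc f S S, hSS, mul_smul_comm,
      mul_smul_comm, ← mul_assoc, ← pow_two, hf2S]
  have hA3 : ((f * S) * (f * S)) * (f * S) = ((M : ℂ) ^ 2) • (f * S) := by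
    rw [hA2', smul_mul_assoc, ← mul_assoc S f S, hSf, mul_assoc f S S, hSS, mul_smul_comm]
    module
  set A : Module.End ℂ V := f * S with hA
  have hA4 : (A * A) * (A * A) = ((M : ℂ) ^ 2) • (A * A) := by
    rw [hA2', smul_mul_assoc, mul_smul_comm, hSS]
    module
  have hA2M : (A * A) * ((M : ℂ) • A) = ((M : ℂ) ^ 3) • A := by
    rw [mul_smul_comm, hA3]
    module
  have hMA2 : ((M : ℂ) • A) * (A * A) = ((M : ℂ) ^ 3) • A := by
    rw [smul_mul_assoc, ← mul_assoc, hA3]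
    module
  have hMAMA : ((M : ℂ) • A) * ((M : ℂ) • A) = ((M : ℂ) ^ 2) • (A * A) := by
    rw [smul_mul_assoc, mul_smul_comm]
    module
  set c : ℂ := (2 * (M : ℂ) ^ 2)⁻¹ with hc
  have h2M2 : (2 * (M : ℂ) ^ 2) ≠ 0 := mul_ne_zero two_ne_zero (pow_ne_zero 2 hMC)
  have hcmul : c * (2 * (M : ℂ) ^ 2) = 1 := inv_mul_cancel₀ h2M2
  set Ep : Module.End ℂ V := c • (A * A + (M : ℂ) • A) with hEp
  set Em : Module.End ℂ V := c • (A * A - (M : ℂ) • A) with hEm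
  have keyp : (A * A + (M : ℂ) • A) * (A * A + (M : ℂ) • A) =
      (2 * (M : ℂ) ^ 2) • (A * A + (M : ℂ) • A) := by
    rw [add_mul, mul_add, mul_add, hA4, hA2M, hMA2, hMAMA]
    module
  have keym : (A * A - (M : ℂ) • A) * (A * A - (M : ℂ) • A) =
      (2 * (M : ℂ) ^ 2) • (A * A - (M : ℂ) • A) := by
    rw [sub_mul, mul_sub, mul_sub, hA4, hA2M, hMA2, hMAMA]
    module
  have hEpidem : Ep * Ep = Ep := by
    rw [hEp, smul_mul_assoc, mul_smul_comm, keyp, smul_smul, smul_smul, mul_assoc, hcmul,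
      mul_one]
  have hEmidem : Em * Em = Em := by
    rw [hEm, smul_mul_assoc, mul_smul_comm, keym, smul_smul, smul_smul, mul_assoc, hcmul,
      mul_one]
  -- trace identities
  have htrA : trace ℂ V A = (M : ℂ) * trace ℂ V f := by
    have hAsum : A = ∑ j ∈ range M, f ^ (2 * j + 1) := by
      rw [hA, hS, Finset.mul_sum]
      exact Finset.sum_congr rfl fun j _ => (_root_.pow_succ' f (2 * j)).symm
    rw [hAsum, map_sum]
    have h : ∀ j ∈ range M, trace ℂ V (f ^ (2 * j + 1)) = trace ℂ V f := fun j _ =>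
      htr _ ⟨j, by ring⟩
    rw [Finset.sum_congr rfl h, Finset.sum_const, card_range, nsmul_eq_mul]
  have hdiff : Ep - Em = (M : ℂ)⁻¹ • A := by
    rw [hEp, hEm, ← smul_sub]
    have h : (A * A + (M : ℂ) • A) - (A * A - (M : ℂ) • A) = (2 * (M : ℂ)) • A := by
      module
    rw [h, smul_smul, hc]
    congr 1
    field_simp
  -- traces of idempotents are natural numbers
  obtain ⟨pp, hpp⟩ := (LinearMap.isProj_iff_isIdempotentElem Ep).mpr hEpidem
  obtain ⟨pm, hpm⟩ := (LinearMap.isProj_iff_isIdempotentElem Em).mpr hEmidem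
  have htEp : trace ℂ V Ep = (Module.finrank ℂ pp : ℂ) := hpp.trace
  have htEm : trace ℂ V Em = (Module.finrank ℂ pm : ℂ) := hpm.trace
  refine ⟨(Module.finrank ℂ pp : ℚ) - (Module.finrank ℂ pm : ℚ), ?_⟩
  have h1 : trace ℂ V (Ep - Em) = trace ℂ V f := by
    rw [hdiff, map_smul, htrA, smul_eq_mul, ← mul_assoc, inv_mul_cancel₀ hMC, one_mul]
  have h2 : trace ℂ V (Ep - Em) = (Module.finrank ℂ pp : ℂ) - (Module.finrank ℂ pm : ℂ) := by
    rw [map_sub, htEp, htEm]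
  rw [← h1, h2]
  push_cast
  ring


theorem isOddRat_of_mulEquiv {G H : Type*} [Group G] [Group H] (e : G ≃* H)
    (h : IsOddRat G) : IsOddRat H := by
  intro g m hm
  obtain ⟨x, hx⟩ := h (e.symm g) m hm
  refine ⟨e x, ?_⟩
  have h2 := congrArg e hx
  simpa [map_mul, map_pow] using h2

theorem isOddRat_prod {G H : Type*} [Group G] [Group H] (hG : IsOddRat G)
    (hH : IsOddRat H) : IsOddRat (G × H) := by
  intro g m hm
  obtain ⟨x₁, h₁⟩ := hG g.1 m hm
  obtain ⟨x₂, h₂⟩ := hH g.2 m hm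
  refine ⟨(x₁, x₂), Prod.ext ?_ ?_⟩ <;> simpa

theorem isOddRat_of_subsingleton (G : Type*) [Group G] [Subsingleton G] : IsOddRat G :=
  fun _ _ _ => ⟨1, Subsingleton.elim _ _⟩

/-- A monoid hom from `Multiplicative (ZMod 2)` determined by an element of order dividing 2. -/
def zmod2Hom {H : Type*} [Monoid H] (s : H) (hs : s * s = 1) :
    Multiplicative (ZMod 2) →* H where
  toFun e := s ^ (e.toAdd.val)
  map_one' := by simp [ZMod.val_zero]
  map_mul' a b := by
    have hper : ∀ n : ℕ, s ^ n = s ^ (n % 2) := by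
      intro n
      conv_lhs => rw [← Nat.div_add_mod n 2]
      have h2 : s ^ 2 = 1 := by rw [pow_two, hs]
      rw [pow_add, pow_mul, h2, one_pow, one_mul]
    show s ^ ((Multiplicative.toAdd a + Multiplicative.toAdd b).val) = _
    rw [ZMod.val_add, ← hper, pow_add]

@[simp] theorem zmod2Hom_one {H : Type*} [Monoid H] (s : H) (hs : s * s = 1) :
    zmod2Hom s hs 1 = 1 := by simp [zmod2Hom, ZMod.val_zero]

theorem zmod2Hom_t {H : Type*} [Monoid H] (s : H) (hs : s * s = 1) :
    zmod2Hom s hs (Multiplicative.ofAdd 1) = s := by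
  show s ^ ((1 : ZMod 2).val) = s
  rw [ZMod.val_one, pow_one]

section Wreath

variable (Q : Type*) [Group Q]

theorem prodComm_sq : (MulEquiv.prodComm : Q × Q ≃* Q × Q) * MulEquiv.prodComm = 1 := by
  ext x <;> rfl

/-- The swap action of `ZMod 2` on `Q × Q`. -/
def wreathPhi : Multiplicative (ZMod 2) →* MulAut (Q × Q) :=
  zmod2Hom (MulEquiv.prodComm : Q × Q ≃* Q × Q) (prodComm_sq Q)

/-- The wreath product `Q ≀ C₂`. -/
abbrev Wreath := (Q × Q) ⋊[wreathPhi Q] Multiplicative (ZMod 2)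

local notation "t" => (Multiplicative.ofAdd (1 : ZMod 2))

theorem wreathPhi_t (p : Q × Q) : wreathPhi Q t p = (p.2, p.1) := by
  rw [wreathPhi, zmod2Hom_t]
  rfl

theorem wreathPhi_one (p : Q × Q) : wreathPhi Q 1 p = p := by
  rw [map_one]
  rfl

theorem zmod2_cases (e : Multiplicative (ZMod 2)) : e = 1 ∨ e = t := by
  revert e
  decide

theorem t_mul_t : t * t = (1 : Multiplicative (ZMod 2)) := by decide

theorem isOddRat_wreath (hQ : IsOddRat Q) : IsOddRat (Wreath Q) := by
  intro g m hm
  obtain ⟨s, rfl⟩ : ∃ s, m = 2 * s + 1 := by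
    obtain ⟨s, hs⟩ := hm; exact ⟨s, by omega⟩
  obtain ⟨⟨a, b⟩, e⟩ := g
  rcases zmod2_cases e with rfl | rfl
  · -- no swap : componentwise
    obtain ⟨u, hu⟩ := hQ a (2 * s + 1) ⟨s, by omega⟩
    obtain ⟨v, hv⟩ := hQ b (2 * s + 1) ⟨s, by omega⟩
    refine ⟨SemidirectProduct.inl (u, v), ?_⟩
    have h1 : (⟨(a, b), 1⟩ : Wreath Q) = SemidirectProduct.inl (a, b) := by
      ext <;> rfl
    rw [h1, ← map_inv, ← map_mul, ← map_mul, ← map_pow]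
    congr 1
    exact Prod.ext (by simpa using hu) (by simpa using hv)
  · -- swap case
    obtain ⟨u, hu⟩ := hQ (a * b) (2 * s + 1) ⟨s, by omega⟩
    refine ⟨SemidirectProduct.inl (u, a⁻¹ * ((a * b) ^ s)⁻¹ * u * a), ?_⟩
    -- compute the power g ^ (2s+1)
    have hg2 : (⟨(a, b), t⟩ : Wreath Q) * ⟨(a, b), t⟩ = SemidirectProduct.inl (a * b, b * a) := by
      apply SemidirectProduct.ext
      · show (a, b) * (wreathPhi Q t (a, b)) = (a * b, b * a)
        rw [wreathPhi_t]
        rfl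
      · exact t_mul_t
    have hgpow : (⟨(a, b), t⟩ : Wreath Q) ^ (2 * s) =
        SemidirectProduct.inl ((a * b) ^ s, (b * a) ^ s) := by
      rw [pow_mul, pow_two, hg2, ← map_pow, Prod.pow_mk]
    have hgm : (⟨(a, b), t⟩ : Wreath Q) ^ (2 * s + 1) =
        ⟨((a * b) ^ s * a, (b * a) ^ s * b), t⟩ := by
      rw [_root_.pow_succ, hgpow]
      apply SemidirectProduct.ext
      · show ((a * b) ^ s, (b * a) ^ s) * (wreathPhi Q 1 (a, b)) = _
        rw [wreathPhi_one]
        rfl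
      · exact one_mul _
    rw [hgm]
    have hxg : (SemidirectProduct.inl (u, a⁻¹ * ((a * b) ^ s)⁻¹ * u * a) : Wreath Q) *
        ⟨(a, b), t⟩ * (SemidirectProduct.inl (u, a⁻¹ * ((a * b) ^ s)⁻¹ * u * a))⁻¹ =
        ⟨(u * a * (a⁻¹ * ((a * b) ^ s)⁻¹ * u * a)⁻¹,
          (a⁻¹ * ((a * b) ^ s)⁻¹ * u * a) * b * u⁻¹), t⟩ := by
      apply SemidirectProduct.ext
      · simp [SemidirectProduct.mul_left, SemidirectProduct.mul_right,
          SemidirectProduct.inv_left, SemidirectProduct.inv_right, wreathPhi_t, wreathPhi_one]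
      · simp [SemidirectProduct.mul_right, SemidirectProduct.inv_right]
    rw [hxg]
    have hcp : (b * a) ^ s = a⁻¹ * (a * b) ^ s * a := by
      have h0 : b * a = MulAut.conj a⁻¹ (a * b) := by
        simp [MulAut.conj_apply]
      rw [h0, ← map_pow]
      simp [MulAut.conj_apply]
    apply SemidirectProduct.ext
    · refine Prod.ext ?_ ?_
      · show u * a * (a⁻¹ * ((a * b) ^ s)⁻¹ * u * a)⁻¹ = (a * b) ^ s * a
        group
      · show (a⁻¹ * ((a * b) ^ s)⁻¹ * u * a) * b * u⁻¹ = (b * a) ^ s * b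
        have h2 : (a⁻¹ * ((a * b) ^ s)⁻¹ * u * a) * b * u⁻¹ =
            a⁻¹ * ((a * b) ^ s)⁻¹ * (u * (a * b) * u⁻¹) := by group
        rw [h2, hu, hcp, show 2 * s + 1 = s + (s + 1) from by omega, pow_add, _root_.pow_succ]
        simp [mul_assoc]
    · rfl

end Wreath

theorem card_wreath_s7 (Q : Type*) [Group Q] : Nat.card (Wreath Q) = 2 * Nat.card Q ^ 2 := by
  have e : Wreath Q ≃ (Q × Q) × Multiplicative (ZMod 2) :=
    ⟨fun x => (x.left, x.right), fun p => ⟨p.1, p.2⟩, fun x => rfl, fun p => rfl⟩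
  rw [Nat.card_congr e, Nat.card_prod, Nat.card_prod]
  have h2 : Nat.card (Multiplicative (ZMod 2)) = 2 := by
    simp [Nat.card_eq_fintype_card]
  rw [h2]
  ring

section Embed

variable {α : Type*} (P : Subgroup (Equiv.Perm α))

/-- The base hom `↥P × ↥P →* Perm (α ⊕ α)`. -/
def baseHom : (↥P × ↥P) →* Equiv.Perm (α ⊕ α) :=
  (Equiv.Perm.sumCongrHom α α).comp ((P.subtype).prodMap (P.subtype))

theorem sumComm_sq : (Equiv.sumComm α α : Equiv.Perm (α ⊕ α)) * Equiv.sumComm α α = 1 :=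
  Equiv.ext fun x => by cases x <;> rfl

/-- The hom sending the generator of `C₂` to the block swap. -/
def swapHom : Multiplicative (ZMod 2) →* Equiv.Perm (α ⊕ α) :=
  zmod2Hom (Equiv.sumComm α α : Equiv.Perm (α ⊕ α)) sumComm_sq

theorem wreath_compat : ∀ e : Multiplicative (ZMod 2),
    (baseHom P).comp ((wreathPhi ↥P e).toMonoidHom) =
      (MulAut.conj (swapHom e)).toMonoidHom.comp (baseHom P) := by
  intro e
  rcases zmod2_cases e with rfl | rfl
  · ext p x <;> simp [wreathPhi_one, swapHom]
  · ext p x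
    have ht : swapHom (Multiplicative.ofAdd (1 : ZMod 2)) =
        (Equiv.sumComm α α : Equiv.Perm (α ⊕ α)) := zmod2Hom_t _ _
    rcases x with x | x <;>
      simp [wreathPhi_t, ht, baseHom, Equiv.Perm.sumCongrHom, MulAut.conj_apply,
        Equiv.Perm.mul_apply, Equiv.Perm.inv_def, Equiv.sumComm, Sum.swap]

/-- The embedding of the wreath product into `Perm (α ⊕ α)`. -/
def wreathToPerm : Wreath ↥P →* Equiv.Perm (α ⊕ α) :=
  SemidirectProduct.lift (baseHom P) swapHom (wreath_compat P)

theorem wreathToPerm_injective [Nonempty α] : Function.Injective (wreathToPerm P) := by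
  rw [injective_iff_map_eq_one]
  rintro ⟨⟨σ, τ⟩, e⟩ h1
  have heval : wreathToPerm P ⟨(σ, τ), e⟩ = baseHom P (σ, τ) * swapHom e := rfl
  rcases zmod2_cases e with rfl | rfl
  · rw [heval, map_one, mul_one] at h1
    have h2 : ((σ : Equiv.Perm α), (τ : Equiv.Perm α)) = 1 :=
      Equiv.Perm.sumCongrHom_injective (by rw [map_one]; exact h1)
    rw [Prod.ext_iff] at h2
    have hσ : σ = 1 := Subtype.ext h2.1
    have hτ : τ = 1 := Subtype.ext h2.2
    rw [hσ, hτ]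
    rfl
  · exfalso
    obtain ⟨a₀⟩ := ‹Nonempty α›
    have h2 := congrArg (fun (f : Equiv.Perm (α ⊕ α)) => f (Sum.inl a₀)) h1
    rw [heval] at h2
    have ht : swapHom (Multiplicative.ofAdd (1 : ZMod 2)) =
        (Equiv.sumComm α α : Equiv.Perm (α ⊕ α)) := zmod2Hom_t _ _
    simp [ht, baseHom, Equiv.Perm.sumCongrHom, Equiv.Perm.mul_apply] at h2

end Embed

/-- `Perm` congruence as a `MulEquiv`. -/
def permCongrMulEquiv {α β : Type*} (e : α ≃ β) : Equiv.Perm α ≃* Equiv.Perm β :=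
  { Equiv.permCongr e with
    map_mul' := fun f g => Equiv.ext fun x => by simp [Equiv.permCongr] }

theorem step_wreath {α : Type*} [Nonempty α] (P : Subgroup (Equiv.Perm α))
    (h1 : IsOddRat ↥P) :
    ∃ W : Subgroup (Equiv.Perm (α ⊕ α)), IsOddRat ↥W ∧
      Nat.card ↥W = 2 * Nat.card ↥P ^ 2 := by
  refine ⟨(wreathToPerm P).range, ?_, ?_⟩
  · exact isOddRat_of_mulEquiv (MonoidHom.ofInjective (wreathToPerm_injective P))
      (isOddRat_wreath ↥P h1)
  · rw [← Nat.card_congr (MonoidHom.ofInjective (wreathToPerm_injective P)).toEquiv,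
      card_wreath_s7]

theorem step_prod {α β : Type*} (P : Subgroup (Equiv.Perm α)) (Q : Subgroup (Equiv.Perm β))
    (hP : IsOddRat ↥P) (hQ : IsOddRat ↥Q) :
    ∃ R : Subgroup (Equiv.Perm (α ⊕ β)), IsOddRat ↥R ∧
      Nat.card ↥R = Nat.card ↥P * Nat.card ↥Q := by
  refine ⟨Subgroup.map (Equiv.Perm.sumCongrHom α β) (P.prod Q), ?_, ?_⟩
  · refine isOddRat_of_mulEquiv
      ((P.prod Q).equivMapOfInjective _ Equiv.Perm.sumCongrHom_injective) ?_
    exact isOddRat_of_mulEquiv (P.prodEquiv Q).symm (isOddRat_prod hP hQ)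
  · rw [← Nat.card_congr ((P.prod Q).equivMapOfInjective _
        Equiv.Perm.sumCongrHom_injective).toEquiv,
      Nat.card_congr (P.prodEquiv Q).toEquiv, Nat.card_prod]

theorem step_congr {α β : Type*} (e : α ≃ β) (P : Subgroup (Equiv.Perm α))
    (h1 : IsOddRat ↥P) :
    ∃ R : Subgroup (Equiv.Perm β), IsOddRat ↥R ∧ Nat.card ↥R = Nat.card ↥P := by
  refine ⟨Subgroup.map (↑(permCongrMulEquiv e) : Equiv.Perm α →* Equiv.Perm β) P, ?_, ?_⟩
  · exact isOddRat_of_mulEquiv ((permCongrMulEquiv e).subgroupMap P) h1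
  · rw [← Nat.card_congr ((permCongrMulEquiv e).subgroupMap P).toEquiv]

section NT

theorem v2_two_pow_factorial : ∀ c : ℕ, padicValNat 2 ((2 ^ c)!) = 2 ^ c - 1 := by
  intro c
  induction c with
  | zero => simp
  | succ c ih =>
    have h : (2 : ℕ) ^ (c + 1) = 2 * 2 ^ c := by ring
    rw [h, padicValNat_factorial_mul, ih]
    have h1 : (1 : ℕ) ≤ 2 ^ c := Nat.one_le_two_pow
    have h2 : (2 : ℕ) ^ (c + 1) = 2 * 2 ^ c := by ring
    omega

theorem geom_aux (a : ℕ) : ∑ i ∈ Finset.Ico 1 (a + 1), 2 ^ (a - i) = 2 ^ a - 1 := by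
  rw [Finset.sum_Ico_eq_sum_range]
  simp only [Nat.add_sub_cancel]
  have h : ∀ i ∈ Finset.range a, 2 ^ (a - (1 + i)) = 2 ^ (a - 1 - i) := by
    intro i hi; congr 1; omega
  rw [Finset.sum_congr rfl h, Finset.sum_range_reflect (fun j => 2 ^ j) a,
    Nat.geomSum_eq (le_refl 2) a]
  simp

theorem v2_split {a r : ℕ} (hr : r < 2 ^ a) :
    padicValNat 2 ((2 ^ a + r)!) = (2 ^ a - 1) + padicValNat 2 (r !) := by
  have hpow : (2 : ℕ) ^ (a + 1) = 2 * 2 ^ a := by ring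
  have hb1 : Nat.log 2 (2 ^ a + r) < a + 1 := by
    apply Nat.log_lt_of_lt_pow (by positivity)
    omega
  have hb2 : Nat.log 2 r < a + 1 :=
    lt_of_le_of_lt (Nat.log_mono_right (Nat.le_add_left r (2 ^ a))) hb1
  rw [padicValNat_factorial hb1, padicValNat_factorial hb2 (p := 2), ← geom_aux a,
    ← Finset.sum_add_distrib]
  apply Finset.sum_congr rfl
  intro i hi
  rw [Finset.mem_Ico] at hi
  have h2 : (2 : ℕ) ^ a = 2 ^ i * 2 ^ (a - i) := by
    rw [← pow_add]; congr 1; omega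
  rw [h2, Nat.mul_add_div (by positivity)]

end NT

theorem exists_oddRat_sylow (n : ℕ) : ∃ P : Subgroup (Equiv.Perm (Fin n)),
    IsOddRat ↥P ∧ Nat.card ↥P = 2 ^ padicValNat 2 (n !) := by
  induction n using Nat.strong_induction_on with
  | _ n ih =>
  rcases lt_or_ge n 2 with hn | hn
  · refine ⟨⊥, isOddRat_of_subsingleton _, ?_⟩
    have hfact : padicValNat 2 (n !) = 0 := by
      interval_cases n <;> simp [Nat.factorial]
    rw [hfact, pow_zero, Subgroup.card_bot]
  · set a := Nat.log 2 n with ha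
    have ha2 : 2 ^ a ≤ n := Nat.pow_log_le_self 2 (by omega)
    have ha3 : n < 2 ^ (a + 1) := Nat.lt_pow_succ_log_self (by norm_num) n
    have hpa : (2 : ℕ) ^ (a + 1) = 2 * 2 ^ a := by ring
    have ha1 : 1 ≤ a := by
      by_contra h
      push_neg at h
      interval_cases a <;> omega
    set m := 2 ^ (a - 1) with hm
    set r := n - 2 ^ a with hr
    have h2m : 2 * m = 2 ^ a := by
      rw [hm, ← _root_.pow_succ']
      congr 1
      omega
    have hm1 : 1 ≤ m := Nat.one_le_two_pow
    have hmn : m < n := by omega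
    have hrn : r < n := by
      have h1 : (1 : ℕ) ≤ 2 ^ a := Nat.one_le_two_pow
      omega
    obtain ⟨P₁, hP₁, hc₁⟩ := ih m hmn
    obtain ⟨P₂, hP₂, hc₂⟩ := ih r hrn
    have hne : Nonempty (Fin m) := ⟨⟨0, by omega⟩⟩
    obtain ⟨W, hW, hcW⟩ := step_wreath P₁ hP₁
    obtain ⟨R, hR, hcR⟩ := step_prod W P₂ hW hP₂
    have he : ((Fin m ⊕ Fin m) ⊕ Fin r) ≃ Fin n :=
      (Equiv.sumCongr finSumFinEquiv (Equiv.refl (Fin r))).trans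
        (finSumFinEquiv.trans (finCongr (by omega)))
    obtain ⟨P, hP, hcP⟩ := step_congr he R hR
    refine ⟨P, hP, ?_⟩
    rw [hcP, hcR, hcW, hc₁, hc₂]
    have hv1 : padicValNat 2 (m !) = m - 1 := by
      rw [hm]; exact v2_two_pow_factorial (a - 1)
    have hvn : padicValNat 2 (n !) = (2 ^ a - 1) + padicValNat 2 (r !) := by
      have hn' : n = 2 ^ a + r := by omega
      rw [hn']
      exact v2_split (by omega)
    rw [hv1, hvn]
    rw [show (2 : ℕ) * (2 ^ (m - 1)) ^ 2 * 2 ^ padicValNat 2 (r !) =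
      2 ^ (1 + (m - 1) * 2 + padicValNat 2 (r !)) from by
        rw [pow_add, pow_add, pow_mul, pow_one]]
    congr 1
    omega

/-- Every complex character of a Sylow 2-subgroup of a symmetric group
`Perm (Fin n)` is rational-valued: for every finite-dimensional complex representation
`V` of `P` and every `g ∈ P`, the trace of the action of `g` on `P` is rational. -/
theorem sylow_two_symm_character_rational
    (n : ℕ) (P : Sylow 2 (Equiv.Perm (Fin n)))
    (V : Type*) [AddCommGroup V] [Module ℂ V] [FiniteDimensional ℂ V]
    (ρ : Representation ℂ ↥(P : Subgroup (Equiv.Perm (Fin n))) V)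
    (g : ↥(P : Subgroup (Equiv.Perm (Fin n)))) :
    ∃ q : ℚ, LinearMap.trace ℂ V (ρ g) = (q : ℂ) := by
  obtain ⟨P₀, hP₀rat, hP₀card⟩ := exists_oddRat_sylow n
  have hp : IsPGroup 2 ↥P₀ := IsPGroup.of_card hP₀card
  obtain ⟨Q, hQ⟩ := hp.exists_le_sylow
  have hcardQ : Nat.card ↥(Q : Subgroup (Equiv.Perm (Fin n))) = 2 ^ padicValNat 2 (n !) := by
    rw [Sylow.card_eq_multiplicity]
    congr 1
    rw [Nat.card_eq_fintype_card, Fintype.card_perm, Fintype.card_fin,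
      Nat.factorization_def _ Nat.prime_two]
  have hPQ : P₀ = (Q : Subgroup (Equiv.Perm (Fin n))) :=
    Subgroup.eq_of_le_of_card_ge hQ (by rw [hcardQ, hP₀card])
  have e1 : ↥P₀ ≃* ↥(Q : Subgroup (Equiv.Perm (Fin n))) := MulEquiv.subgroupCongr hPQ
  have e2 : ↥(Q : Subgroup (Equiv.Perm (Fin n))) ≃* ↥(P : Subgroup (Equiv.Perm (Fin n))) :=
    Sylow.equiv Q P
  have hrat : IsOddRat ↥(P : Subgroup (Equiv.Perm (Fin n))) :=
    isOddRat_of_mulEquiv (e1.trans e2) hP₀rat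
  have hG : ∀ g : ↥(P : Subgroup (Equiv.Perm (Fin n))), ∃ k : ℕ, orderOf g = 2 ^ k :=
    IsPGroup.iff_orderOf.mp P.isPGroup'
  exact trace_rat_of_oddRat hG hrat ρ g
end

section
/- Let D₄ be the subgroup of Perm(Fin 4) generated by the 4-cycle r = (0 1 2 3) and the transposition s = (0 2) (a dihedral group of order 8). For g ∈ D₄, let d(g) = 4 − (the number of orbits of the cyclic subgroup generated by g acting on Fin 4). Then for every odd positive integer q, the sum over all pairs (g, h) ∈ D₄ × D₄ with h g h⁻¹ = g^q of (1/q)^{d(g)} (as a rational number) equals 8 + 8/q + 16/q² + 8/q³. -/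
set_option maxRecDepth 40000
set_option maxHeartbeats 1000000

open MulAction


open Equiv

/-- The dihedral group of order 8 inside `Perm (Fin 4)`, generated by the 4-cycle
`(0 1 2 3)` and the transposition `(0 2)`. -/
def dihedralD4 : Subgroup (Perm (Fin 4)) :=
  Subgroup.closure {c[(0 : Fin 4), 1, 2, 3], swap (0 : Fin 4) 2}

/-- The counting function attached to the permutation representation of a permutation of
`Fin 4` (the tame discriminant exponent): `4` minus the number of orbits of the cyclic
group generated by `g` acting on `Fin 4`. -/
noncomputable def dExp (g : Perm (Fin 4)) : ℕ :=
  4 - Nat.card (MulAction.orbitRel.Quotient (Subgroup.zpowers g) (Fin 4))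

def rr : Perm (Fin 4) := c[(0 : Fin 4), 1, 2, 3]
def ss : Perm (Fin 4) := swap (0 : Fin 4) 2

def Dfin : Finset (Perm (Fin 4)) :=
  {1, rr, rr^2, rr^3, ss, rr*ss, rr^2*ss, rr^3*ss}

def DS : Subgroup (Perm (Fin 4)) where
  carrier := {g | g ∈ Dfin}
  one_mem' := by show (1 : Perm (Fin 4)) ∈ Dfin; decide
  mul_mem' := by intro a b ha hb; revert a b ha hb
                 show ∀ a b : Perm (Fin 4), a ∈ Dfin → b ∈ Dfin → a*b ∈ Dfin; decide
  inv_mem' := by intro a ha; revert a ha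
                 show ∀ a : Perm (Fin 4), a ∈ Dfin → a⁻¹ ∈ Dfin; decide

lemma hrr : rr ∈ dihedralD4 := Subgroup.subset_closure (by left; rfl)
lemma hss : ss ∈ dihedralD4 := Subgroup.subset_closure (by right; rfl)

lemma dih_eq : dihedralD4 = DS := by
  apply le_antisymm
  · rw [dihedralD4, Subgroup.closure_le]
    intro g hg
    rcases hg with h | h <;> subst h <;> show _ ∈ Dfin <;> decide
  · intro g hg
    change g ∈ Dfin at hg
    simp only [Dfin, Finset.mem_insert, Finset.mem_singleton] at hg
    rcases hg with rfl|rfl|rfl|rfl|rfl|rfl|rfl|rfl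
    · exact one_mem _
    · exact hrr
    · exact pow_mem hrr 2
    · exact pow_mem hrr 3
    · exact hss
    · exact mul_mem hrr hss
    · exact mul_mem (pow_mem hrr 2) hss
    · exact mul_mem (pow_mem hrr 3) hss

lemma mem_dih_iff (g : Perm (Fin 4)) : g ∈ dihedralD4 ↔ g ∈ Dfin := by
  rw [dih_eq]; rfl

instance : DecidablePred (· ∈ dihedralD4) :=
  fun g => decidable_of_iff (g ∈ Dfin) (mem_dih_iff g).symm

/- ## dExp machinery -/
def Rrel (g : Perm (Fin 4)) (a b : Fin 4) : Prop := ∃ k : Fin 4, (g ^ (k : ℕ)) b = a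

instance (g : Perm (Fin 4)) : DecidableRel (Rrel g) :=
  fun _ _ => Fintype.decidableExistsFintype

lemma key_iff (g : Perm (Fin 4)) (h4 : g ^ 4 = 1) (a b : Fin 4) :
    orbitRel (Subgroup.zpowers g) (Fin 4) a b ↔ Rrel g a b := by
  rw [orbitRel_apply, mem_orbit_iff]
  constructor
  · rintro ⟨⟨x, m, rfl⟩, hx⟩
    refine ⟨⟨(m % 4).toNat, ?_⟩, ?_⟩
    · have := Int.emod_lt_of_pos m (by norm_num : (0:ℤ) < 4)
      have := Int.emod_nonneg m (by norm_num : (4:ℤ) ≠ 0)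
      omega
    · have hm : g ^ m = g ^ ((m % 4).toNat) := by
        conv_lhs => rw [← Int.mul_ediv_add_emod m 4]
        rw [zpow_add, zpow_mul]
        have : (g : Perm (Fin 4)) ^ (4 : ℤ) = 1 := by
          rw [show (4:ℤ) = ((4:ℕ):ℤ) by norm_num, zpow_natCast, h4]
        rw [this, one_zpow, one_mul]
        rw [← zpow_natCast, Int.toNat_of_nonneg (Int.emod_nonneg m (by norm_num))]
      simp only [Subgroup.mk_smul] at hx ⊢
      rw [← hx]
      change (g ^ ((m % 4).toNat)) b = (g ^ m) b
      rw [← hm]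
  · rintro ⟨k, hk⟩
    exact ⟨⟨g ^ (k : ℕ), ⟨((k : ℕ) : ℤ), zpow_natCast g (k : ℕ)⟩⟩, hk⟩

def setoidR (g : Perm (Fin 4)) (h4 : g ^ 4 = 1) : Setoid (Fin 4) where
  r := Rrel g
  iseqv := by
    have e := (orbitRel (Subgroup.zpowers g) (Fin 4)).iseqv
    constructor
    · intro a; exact (key_iff g h4 a a).mp (e.refl a)
    · intro a b h; exact (key_iff g h4 b a).mp (e.symm ((key_iff g h4 a b).mpr h))
    · intro a b c h1 h2
      exact (key_iff g h4 a c).mp (e.trans ((key_iff g h4 a b).mpr h1) ((key_iff g h4 b c).mpr h2))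

instance fintypeQR (g : Perm (Fin 4)) (h4 : g ^ 4 = 1) : Fintype (Quotient (setoidR g h4)) :=
  @Quotient.fintype _ _ (setoidR g h4) (fun a b => inferInstanceAs (Decidable (Rrel g a b)))

lemma dExp_eq (g : Perm (Fin 4)) (h4 : g ^ 4 = 1) :
    dExp g = 4 - Fintype.card (Quotient (setoidR g h4)) := by
  rw [dExp]
  congr 1
  rw [Nat.card_congr (Quotient.congrRight (r' := setoidR g h4) (fun a b => key_iff g h4 a b)),
    Nat.card_eq_fintype_card]

lemma dExp_one : dExp 1 = 0 := by rw [dExp_eq _ (by decide)]; decide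
lemma dExp_rr : dExp rr = 3 := by rw [dExp_eq _ (by decide)]; decide
lemma dExp_rr2 : dExp (rr^2) = 2 := by rw [dExp_eq _ (by decide)]; decide
lemma dExp_rr3 : dExp (rr^3) = 3 := by rw [dExp_eq _ (by decide)]; decide
lemma dExp_ss : dExp ss = 1 := by rw [dExp_eq _ (by decide)]; decide
lemma dExp_rs : dExp (rr*ss) = 2 := by rw [dExp_eq _ (by decide)]; decide
lemma dExp_r2s : dExp (rr^2*ss) = 1 := by rw [dExp_eq _ (by decide)]; decide
lemma dExp_r3s : dExp (rr^3*ss) = 2 := by rw [dExp_eq _ (by decide)]; decide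

lemma hsum (f : Perm (Fin 4) → ℚ) :
    ∑ x ∈ Dfin, f x =
      f 1 + (f rr + (f (rr^2) + (f (rr^3) + (f ss + (f (rr*ss) + (f (rr^2*ss) + f (rr^3*ss))))))) := by
  rw [Dfin]
  rw [Finset.sum_insert (by decide), Finset.sum_insert (by decide),
    Finset.sum_insert (by decide), Finset.sum_insert (by decide),
    Finset.sum_insert (by decide), Finset.sum_insert (by decide),
    Finset.sum_insert (by decide), Finset.sum_singleton]

lemma pow_q (g : Perm (Fin 4)) (h4 : g ^ 4 = 1) (q : ℕ) : g ^ q = g ^ (q % 4) := by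
  conv_lhs => rw [← Nat.div_add_mod q 4]
  rw [pow_add, pow_mul, h4, one_pow, one_mul]

lemma cond0 : ((1 : Equiv.Perm (Fin 4)) * (1) * (1)⁻¹ = (1) ^ 1 : Prop) = True := eq_true (by decide)
lemma cond1 : ((1 : Equiv.Perm (Fin 4)) * (1) * (1)⁻¹ = (1) ^ 3 : Prop) = True := eq_true (by decide)
lemma cond2 : ((rr : Equiv.Perm (Fin 4)) * (1) * (rr)⁻¹ = (1) ^ 1 : Prop) = True := eq_true (by decide)
lemma cond3 : ((rr : Equiv.Perm (Fin 4)) * (1) * (rr)⁻¹ = (1) ^ 3 : Prop) = True := eq_true (by decide)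
lemma cond4 : ((rr^2 : Equiv.Perm (Fin 4)) * (1) * (rr^2)⁻¹ = (1) ^ 1 : Prop) = True := eq_true (by decide)
lemma cond5 : ((rr^2 : Equiv.Perm (Fin 4)) * (1) * (rr^2)⁻¹ = (1) ^ 3 : Prop) = True := eq_true (by decide)
lemma cond6 : ((rr^3 : Equiv.Perm (Fin 4)) * (1) * (rr^3)⁻¹ = (1) ^ 1 : Prop) = True := eq_true (by decide)
lemma cond7 : ((rr^3 : Equiv.Perm (Fin 4)) * (1) * (rr^3)⁻¹ = (1) ^ 3 : Prop) = True := eq_true (by decide)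
lemma cond8 : ((ss : Equiv.Perm (Fin 4)) * (1) * (ss)⁻¹ = (1) ^ 1 : Prop) = True := eq_true (by decide)
lemma cond9 : ((ss : Equiv.Perm (Fin 4)) * (1) * (ss)⁻¹ = (1) ^ 3 : Prop) = True := eq_true (by decide)
lemma cond10 : ((rr*ss : Equiv.Perm (Fin 4)) * (1) * (rr*ss)⁻¹ = (1) ^ 1 : Prop) = True := eq_true (by decide)
lemma cond11 : ((rr*ss : Equiv.Perm (Fin 4)) * (1) * (rr*ss)⁻¹ = (1) ^ 3 : Prop) = True := eq_true (by decide)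
lemma cond12 : ((rr^2*ss : Equiv.Perm (Fin 4)) * (1) * (rr^2*ss)⁻¹ = (1) ^ 1 : Prop) = True := eq_true (by decide)
lemma cond13 : ((rr^2*ss : Equiv.Perm (Fin 4)) * (1) * (rr^2*ss)⁻¹ = (1) ^ 3 : Prop) = True := eq_true (by decide)
lemma cond14 : ((rr^3*ss : Equiv.Perm (Fin 4)) * (1) * (rr^3*ss)⁻¹ = (1) ^ 1 : Prop) = True := eq_true (by decide)
lemma cond15 : ((rr^3*ss : Equiv.Perm (Fin 4)) * (1) * (rr^3*ss)⁻¹ = (1) ^ 3 : Prop) = True := eq_true (by decide)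
lemma cond16 : ((1 : Equiv.Perm (Fin 4)) * (rr) * (1)⁻¹ = (rr) ^ 1 : Prop) = True := eq_true (by decide)
lemma cond17 : ((1 : Equiv.Perm (Fin 4)) * (rr) * (1)⁻¹ = (rr) ^ 3 : Prop) = False := eq_false (by decide)
lemma cond18 : ((rr : Equiv.Perm (Fin 4)) * (rr) * (rr)⁻¹ = (rr) ^ 1 : Prop) = True := eq_true (by decide)
lemma cond19 : ((rr : Equiv.Perm (Fin 4)) * (rr) * (rr)⁻¹ = (rr) ^ 3 : Prop) = False := eq_false (by decide)
lemma cond20 : ((rr^2 : Equiv.Perm (Fin 4)) * (rr) * (rr^2)⁻¹ = (rr) ^ 1 : Prop) = True := eq_true (by decide)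
lemma cond21 : ((rr^2 : Equiv.Perm (Fin 4)) * (rr) * (rr^2)⁻¹ = (rr) ^ 3 : Prop) = False := eq_false (by decide)
lemma cond22 : ((rr^3 : Equiv.Perm (Fin 4)) * (rr) * (rr^3)⁻¹ = (rr) ^ 1 : Prop) = True := eq_true (by decide)
lemma cond23 : ((rr^3 : Equiv.Perm (Fin 4)) * (rr) * (rr^3)⁻¹ = (rr) ^ 3 : Prop) = False := eq_false (by decide)
lemma cond24 : ((ss : Equiv.Perm (Fin 4)) * (rr) * (ss)⁻¹ = (rr) ^ 1 : Prop) = False := eq_false (by decide)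
lemma cond25 : ((ss : Equiv.Perm (Fin 4)) * (rr) * (ss)⁻¹ = (rr) ^ 3 : Prop) = True := eq_true (by decide)
lemma cond26 : ((rr*ss : Equiv.Perm (Fin 4)) * (rr) * (rr*ss)⁻¹ = (rr) ^ 1 : Prop) = False := eq_false (by decide)
lemma cond27 : ((rr*ss : Equiv.Perm (Fin 4)) * (rr) * (rr*ss)⁻¹ = (rr) ^ 3 : Prop) = True := eq_true (by decide)
lemma cond28 : ((rr^2*ss : Equiv.Perm (Fin 4)) * (rr) * (rr^2*ss)⁻¹ = (rr) ^ 1 : Prop) = False := eq_false (by decide)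
lemma cond29 : ((rr^2*ss : Equiv.Perm (Fin 4)) * (rr) * (rr^2*ss)⁻¹ = (rr) ^ 3 : Prop) = True := eq_true (by decide)
lemma cond30 : ((rr^3*ss : Equiv.Perm (Fin 4)) * (rr) * (rr^3*ss)⁻¹ = (rr) ^ 1 : Prop) = False := eq_false (by decide)
lemma cond31 : ((rr^3*ss : Equiv.Perm (Fin 4)) * (rr) * (rr^3*ss)⁻¹ = (rr) ^ 3 : Prop) = True := eq_true (by decide)
lemma cond32 : ((1 : Equiv.Perm (Fin 4)) * (rr^2) * (1)⁻¹ = (rr^2) ^ 1 : Prop) = True := eq_true (by decide)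
lemma cond33 : ((1 : Equiv.Perm (Fin 4)) * (rr^2) * (1)⁻¹ = (rr^2) ^ 3 : Prop) = True := eq_true (by decide)
lemma cond34 : ((rr : Equiv.Perm (Fin 4)) * (rr^2) * (rr)⁻¹ = (rr^2) ^ 1 : Prop) = True := eq_true (by decide)
lemma cond35 : ((rr : Equiv.Perm (Fin 4)) * (rr^2) * (rr)⁻¹ = (rr^2) ^ 3 : Prop) = True := eq_true (by decide)
lemma cond36 : ((rr^2 : Equiv.Perm (Fin 4)) * (rr^2) * (rr^2)⁻¹ = (rr^2) ^ 1 : Prop) = True := eq_true (by decide)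
lemma cond37 : ((rr^2 : Equiv.Perm (Fin 4)) * (rr^2) * (rr^2)⁻¹ = (rr^2) ^ 3 : Prop) = True := eq_true (by decide)
lemma cond38 : ((rr^3 : Equiv.Perm (Fin 4)) * (rr^2) * (rr^3)⁻¹ = (rr^2) ^ 1 : Prop) = True := eq_true (by decide)
lemma cond39 : ((rr^3 : Equiv.Perm (Fin 4)) * (rr^2) * (rr^3)⁻¹ = (rr^2) ^ 3 : Prop) = True := eq_true (by decide)
lemma cond40 : ((ss : Equiv.Perm (Fin 4)) * (rr^2) * (ss)⁻¹ = (rr^2) ^ 1 : Prop) = True := eq_true (by decide)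
lemma cond41 : ((ss : Equiv.Perm (Fin 4)) * (rr^2) * (ss)⁻¹ = (rr^2) ^ 3 : Prop) = True := eq_true (by decide)
lemma cond42 : ((rr*ss : Equiv.Perm (Fin 4)) * (rr^2) * (rr*ss)⁻¹ = (rr^2) ^ 1 : Prop) = True := eq_true (by decide)
lemma cond43 : ((rr*ss : Equiv.Perm (Fin 4)) * (rr^2) * (rr*ss)⁻¹ = (rr^2) ^ 3 : Prop) = True := eq_true (by decide)
lemma cond44 : ((rr^2*ss : Equiv.Perm (Fin 4)) * (rr^2) * (rr^2*ss)⁻¹ = (rr^2) ^ 1 : Prop) = True := eq_true (by decide)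
lemma cond45 : ((rr^2*ss : Equiv.Perm (Fin 4)) * (rr^2) * (rr^2*ss)⁻¹ = (rr^2) ^ 3 : Prop) = True := eq_true (by decide)
lemma cond46 : ((rr^3*ss : Equiv.Perm (Fin 4)) * (rr^2) * (rr^3*ss)⁻¹ = (rr^2) ^ 1 : Prop) = True := eq_true (by decide)
lemma cond47 : ((rr^3*ss : Equiv.Perm (Fin 4)) * (rr^2) * (rr^3*ss)⁻¹ = (rr^2) ^ 3 : Prop) = True := eq_true (by decide)
lemma cond48 : ((1 : Equiv.Perm (Fin 4)) * (rr^3) * (1)⁻¹ = (rr^3) ^ 1 : Prop) = True := eq_true (by decide)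
lemma cond49 : ((1 : Equiv.Perm (Fin 4)) * (rr^3) * (1)⁻¹ = (rr^3) ^ 3 : Prop) = False := eq_false (by decide)
lemma cond50 : ((rr : Equiv.Perm (Fin 4)) * (rr^3) * (rr)⁻¹ = (rr^3) ^ 1 : Prop) = True := eq_true (by decide)
lemma cond51 : ((rr : Equiv.Perm (Fin 4)) * (rr^3) * (rr)⁻¹ = (rr^3) ^ 3 : Prop) = False := eq_false (by decide)
lemma cond52 : ((rr^2 : Equiv.Perm (Fin 4)) * (rr^3) * (rr^2)⁻¹ = (rr^3) ^ 1 : Prop) = True := eq_true (by decide)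
lemma cond53 : ((rr^2 : Equiv.Perm (Fin 4)) * (rr^3) * (rr^2)⁻¹ = (rr^3) ^ 3 : Prop) = False := eq_false (by decide)
lemma cond54 : ((rr^3 : Equiv.Perm (Fin 4)) * (rr^3) * (rr^3)⁻¹ = (rr^3) ^ 1 : Prop) = True := eq_true (by decide)
lemma cond55 : ((rr^3 : Equiv.Perm (Fin 4)) * (rr^3) * (rr^3)⁻¹ = (rr^3) ^ 3 : Prop) = False := eq_false (by decide)
lemma cond56 : ((ss : Equiv.Perm (Fin 4)) * (rr^3) * (ss)⁻¹ = (rr^3) ^ 1 : Prop) = False := eq_false (by decide)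
lemma cond57 : ((ss : Equiv.Perm (Fin 4)) * (rr^3) * (ss)⁻¹ = (rr^3) ^ 3 : Prop) = True := eq_true (by decide)
lemma cond58 : ((rr*ss : Equiv.Perm (Fin 4)) * (rr^3) * (rr*ss)⁻¹ = (rr^3) ^ 1 : Prop) = False := eq_false (by decide)
lemma cond59 : ((rr*ss : Equiv.Perm (Fin 4)) * (rr^3) * (rr*ss)⁻¹ = (rr^3) ^ 3 : Prop) = True := eq_true (by decide)
lemma cond60 : ((rr^2*ss : Equiv.Perm (Fin 4)) * (rr^3) * (rr^2*ss)⁻¹ = (rr^3) ^ 1 : Prop) = False := eq_false (by decide)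
lemma cond61 : ((rr^2*ss : Equiv.Perm (Fin 4)) * (rr^3) * (rr^2*ss)⁻¹ = (rr^3) ^ 3 : Prop) = True := eq_true (by decide)
lemma cond62 : ((rr^3*ss : Equiv.Perm (Fin 4)) * (rr^3) * (rr^3*ss)⁻¹ = (rr^3) ^ 1 : Prop) = False := eq_false (by decide)
lemma cond63 : ((rr^3*ss : Equiv.Perm (Fin 4)) * (rr^3) * (rr^3*ss)⁻¹ = (rr^3) ^ 3 : Prop) = True := eq_true (by decide)
lemma cond64 : ((1 : Equiv.Perm (Fin 4)) * (ss) * (1)⁻¹ = (ss) ^ 1 : Prop) = True := eq_true (by decide)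
lemma cond65 : ((1 : Equiv.Perm (Fin 4)) * (ss) * (1)⁻¹ = (ss) ^ 3 : Prop) = True := eq_true (by decide)
lemma cond66 : ((rr : Equiv.Perm (Fin 4)) * (ss) * (rr)⁻¹ = (ss) ^ 1 : Prop) = False := eq_false (by decide)
lemma cond67 : ((rr : Equiv.Perm (Fin 4)) * (ss) * (rr)⁻¹ = (ss) ^ 3 : Prop) = False := eq_false (by decide)
lemma cond68 : ((rr^2 : Equiv.Perm (Fin 4)) * (ss) * (rr^2)⁻¹ = (ss) ^ 1 : Prop) = True := eq_true (by decide)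
lemma cond69 : ((rr^2 : Equiv.Perm (Fin 4)) * (ss) * (rr^2)⁻¹ = (ss) ^ 3 : Prop) = True := eq_true (by decide)
lemma cond70 : ((rr^3 : Equiv.Perm (Fin 4)) * (ss) * (rr^3)⁻¹ = (ss) ^ 1 : Prop) = False := eq_false (by decide)
lemma cond71 : ((rr^3 : Equiv.Perm (Fin 4)) * (ss) * (rr^3)⁻¹ = (ss) ^ 3 : Prop) = False := eq_false (by decide)
lemma cond72 : ((ss : Equiv.Perm (Fin 4)) * (ss) * (ss)⁻¹ = (ss) ^ 1 : Prop) = True := eq_true (by decide)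
lemma cond73 : ((ss : Equiv.Perm (Fin 4)) * (ss) * (ss)⁻¹ = (ss) ^ 3 : Prop) = True := eq_true (by decide)
lemma cond74 : ((rr*ss : Equiv.Perm (Fin 4)) * (ss) * (rr*ss)⁻¹ = (ss) ^ 1 : Prop) = False := eq_false (by decide)
lemma cond75 : ((rr*ss : Equiv.Perm (Fin 4)) * (ss) * (rr*ss)⁻¹ = (ss) ^ 3 : Prop) = False := eq_false (by decide)
lemma cond76 : ((rr^2*ss : Equiv.Perm (Fin 4)) * (ss) * (rr^2*ss)⁻¹ = (ss) ^ 1 : Prop) = True := eq_true (by decide)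
lemma cond77 : ((rr^2*ss : Equiv.Perm (Fin 4)) * (ss) * (rr^2*ss)⁻¹ = (ss) ^ 3 : Prop) = True := eq_true (by decide)
lemma cond78 : ((rr^3*ss : Equiv.Perm (Fin 4)) * (ss) * (rr^3*ss)⁻¹ = (ss) ^ 1 : Prop) = False := eq_false (by decide)
lemma cond79 : ((rr^3*ss : Equiv.Perm (Fin 4)) * (ss) * (rr^3*ss)⁻¹ = (ss) ^ 3 : Prop) = False := eq_false (by decide)
lemma cond80 : ((1 : Equiv.Perm (Fin 4)) * (rr*ss) * (1)⁻¹ = (rr*ss) ^ 1 : Prop) = True := eq_true (by decide)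
lemma cond81 : ((1 : Equiv.Perm (Fin 4)) * (rr*ss) * (1)⁻¹ = (rr*ss) ^ 3 : Prop) = True := eq_true (by decide)
lemma cond82 : ((rr : Equiv.Perm (Fin 4)) * (rr*ss) * (rr)⁻¹ = (rr*ss) ^ 1 : Prop) = False := eq_false (by decide)
lemma cond83 : ((rr : Equiv.Perm (Fin 4)) * (rr*ss) * (rr)⁻¹ = (rr*ss) ^ 3 : Prop) = False := eq_false (by decide)
lemma cond84 : ((rr^2 : Equiv.Perm (Fin 4)) * (rr*ss) * (rr^2)⁻¹ = (rr*ss) ^ 1 : Prop) = True := eq_true (by decide)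
lemma cond85 : ((rr^2 : Equiv.Perm (Fin 4)) * (rr*ss) * (rr^2)⁻¹ = (rr*ss) ^ 3 : Prop) = True := eq_true (by decide)
lemma cond86 : ((rr^3 : Equiv.Perm (Fin 4)) * (rr*ss) * (rr^3)⁻¹ = (rr*ss) ^ 1 : Prop) = False := eq_false (by decide)
lemma cond87 : ((rr^3 : Equiv.Perm (Fin 4)) * (rr*ss) * (rr^3)⁻¹ = (rr*ss) ^ 3 : Prop) = False := eq_false (by decide)
lemma cond88 : ((ss : Equiv.Perm (Fin 4)) * (rr*ss) * (ss)⁻¹ = (rr*ss) ^ 1 : Prop) = False := eq_false (by decide)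
lemma cond89 : ((ss : Equiv.Perm (Fin 4)) * (rr*ss) * (ss)⁻¹ = (rr*ss) ^ 3 : Prop) = False := eq_false (by decide)
lemma cond90 : ((rr*ss : Equiv.Perm (Fin 4)) * (rr*ss) * (rr*ss)⁻¹ = (rr*ss) ^ 1 : Prop) = True := eq_true (by decide)
lemma cond91 : ((rr*ss : Equiv.Perm (Fin 4)) * (rr*ss) * (rr*ss)⁻¹ = (rr*ss) ^ 3 : Prop) = True := eq_true (by decide)
lemma cond92 : ((rr^2*ss : Equiv.Perm (Fin 4)) * (rr*ss) * (rr^2*ss)⁻¹ = (rr*ss) ^ 1 : Prop) = False := eq_false (by decide)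
lemma cond93 : ((rr^2*ss : Equiv.Perm (Fin 4)) * (rr*ss) * (rr^2*ss)⁻¹ = (rr*ss) ^ 3 : Prop) = False := eq_false (by decide)
lemma cond94 : ((rr^3*ss : Equiv.Perm (Fin 4)) * (rr*ss) * (rr^3*ss)⁻¹ = (rr*ss) ^ 1 : Prop) = True := eq_true (by decide)
lemma cond95 : ((rr^3*ss : Equiv.Perm (Fin 4)) * (rr*ss) * (rr^3*ss)⁻¹ = (rr*ss) ^ 3 : Prop) = True := eq_true (by decide)
lemma cond96 : ((1 : Equiv.Perm (Fin 4)) * (rr^2*ss) * (1)⁻¹ = (rr^2*ss) ^ 1 : Prop) = True := eq_true (by decide)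
lemma cond97 : ((1 : Equiv.Perm (Fin 4)) * (rr^2*ss) * (1)⁻¹ = (rr^2*ss) ^ 3 : Prop) = True := eq_true (by decide)
lemma cond98 : ((rr : Equiv.Perm (Fin 4)) * (rr^2*ss) * (rr)⁻¹ = (rr^2*ss) ^ 1 : Prop) = False := eq_false (by decide)
lemma cond99 : ((rr : Equiv.Perm (Fin 4)) * (rr^2*ss) * (rr)⁻¹ = (rr^2*ss) ^ 3 : Prop) = False := eq_false (by decide)
lemma cond100 : ((rr^2 : Equiv.Perm (Fin 4)) * (rr^2*ss) * (rr^2)⁻¹ = (rr^2*ss) ^ 1 : Prop) = True := eq_true (by decide)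
lemma cond101 : ((rr^2 : Equiv.Perm (Fin 4)) * (rr^2*ss) * (rr^2)⁻¹ = (rr^2*ss) ^ 3 : Prop) = True := eq_true (by decide)
lemma cond102 : ((rr^3 : Equiv.Perm (Fin 4)) * (rr^2*ss) * (rr^3)⁻¹ = (rr^2*ss) ^ 1 : Prop) = False := eq_false (by decide)
lemma cond103 : ((rr^3 : Equiv.Perm (Fin 4)) * (rr^2*ss) * (rr^3)⁻¹ = (rr^2*ss) ^ 3 : Prop) = False := eq_false (by decide)
lemma cond104 : ((ss : Equiv.Perm (Fin 4)) * (rr^2*ss) * (ss)⁻¹ = (rr^2*ss) ^ 1 : Prop) = True := eq_true (by decide)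
lemma cond105 : ((ss : Equiv.Perm (Fin 4)) * (rr^2*ss) * (ss)⁻¹ = (rr^2*ss) ^ 3 : Prop) = True := eq_true (by decide)
lemma cond106 : ((rr*ss : Equiv.Perm (Fin 4)) * (rr^2*ss) * (rr*ss)⁻¹ = (rr^2*ss) ^ 1 : Prop) = False := eq_false (by decide)
lemma cond107 : ((rr*ss : Equiv.Perm (Fin 4)) * (rr^2*ss) * (rr*ss)⁻¹ = (rr^2*ss) ^ 3 : Prop) = False := eq_false (by decide)
lemma cond108 : ((rr^2*ss : Equiv.Perm (Fin 4)) * (rr^2*ss) * (rr^2*ss)⁻¹ = (rr^2*ss) ^ 1 : Prop) = True := eq_true (by decide)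
lemma cond109 : ((rr^2*ss : Equiv.Perm (Fin 4)) * (rr^2*ss) * (rr^2*ss)⁻¹ = (rr^2*ss) ^ 3 : Prop) = True := eq_true (by decide)
lemma cond110 : ((rr^3*ss : Equiv.Perm (Fin 4)) * (rr^2*ss) * (rr^3*ss)⁻¹ = (rr^2*ss) ^ 1 : Prop) = False := eq_false (by decide)
lemma cond111 : ((rr^3*ss : Equiv.Perm (Fin 4)) * (rr^2*ss) * (rr^3*ss)⁻¹ = (rr^2*ss) ^ 3 : Prop) = False := eq_false (by decide)
lemma cond112 : ((1 : Equiv.Perm (Fin 4)) * (rr^3*ss) * (1)⁻¹ = (rr^3*ss) ^ 1 : Prop) = True := eq_true (by decide)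
lemma cond113 : ((1 : Equiv.Perm (Fin 4)) * (rr^3*ss) * (1)⁻¹ = (rr^3*ss) ^ 3 : Prop) = True := eq_true (by decide)
lemma cond114 : ((rr : Equiv.Perm (Fin 4)) * (rr^3*ss) * (rr)⁻¹ = (rr^3*ss) ^ 1 : Prop) = False := eq_false (by decide)
lemma cond115 : ((rr : Equiv.Perm (Fin 4)) * (rr^3*ss) * (rr)⁻¹ = (rr^3*ss) ^ 3 : Prop) = False := eq_false (by decide)
lemma cond116 : ((rr^2 : Equiv.Perm (Fin 4)) * (rr^3*ss) * (rr^2)⁻¹ = (rr^3*ss) ^ 1 : Prop) = True := eq_true (by decide)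
lemma cond117 : ((rr^2 : Equiv.Perm (Fin 4)) * (rr^3*ss) * (rr^2)⁻¹ = (rr^3*ss) ^ 3 : Prop) = True := eq_true (by decide)
lemma cond118 : ((rr^3 : Equiv.Perm (Fin 4)) * (rr^3*ss) * (rr^3)⁻¹ = (rr^3*ss) ^ 1 : Prop) = False := eq_false (by decide)
lemma cond119 : ((rr^3 : Equiv.Perm (Fin 4)) * (rr^3*ss) * (rr^3)⁻¹ = (rr^3*ss) ^ 3 : Prop) = False := eq_false (by decide)
lemma cond120 : ((ss : Equiv.Perm (Fin 4)) * (rr^3*ss) * (ss)⁻¹ = (rr^3*ss) ^ 1 : Prop) = False := eq_false (by decide)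
lemma cond121 : ((ss : Equiv.Perm (Fin 4)) * (rr^3*ss) * (ss)⁻¹ = (rr^3*ss) ^ 3 : Prop) = False := eq_false (by decide)
lemma cond122 : ((rr*ss : Equiv.Perm (Fin 4)) * (rr^3*ss) * (rr*ss)⁻¹ = (rr^3*ss) ^ 1 : Prop) = True := eq_true (by decide)
lemma cond123 : ((rr*ss : Equiv.Perm (Fin 4)) * (rr^3*ss) * (rr*ss)⁻¹ = (rr^3*ss) ^ 3 : Prop) = True := eq_true (by decide)
lemma cond124 : ((rr^2*ss : Equiv.Perm (Fin 4)) * (rr^3*ss) * (rr^2*ss)⁻¹ = (rr^3*ss) ^ 1 : Prop) = False := eq_false (by decide)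
lemma cond125 : ((rr^2*ss : Equiv.Perm (Fin 4)) * (rr^3*ss) * (rr^2*ss)⁻¹ = (rr^3*ss) ^ 3 : Prop) = False := eq_false (by decide)
lemma cond126 : ((rr^3*ss : Equiv.Perm (Fin 4)) * (rr^3*ss) * (rr^3*ss)⁻¹ = (rr^3*ss) ^ 1 : Prop) = True := eq_true (by decide)
lemma cond127 : ((rr^3*ss : Equiv.Perm (Fin 4)) * (rr^3*ss) * (rr^3*ss)⁻¹ = (rr^3*ss) ^ 3 : Prop) = True := eq_true (by decide)


/-- For every odd positive integer `q`, the total (tame) mass of `D₄`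
with the discriminant counting function `d` is
`Σ_{(g,h) ∈ D₄², hgh⁻¹ = g^q} (1/q)^{d g} = 8 + 8/q + 16/q² + 8/q³`. -/
theorem d4_mass_discriminant (q : ℕ) (hq : Odd q) (hq0 : 0 < q) :
    ∑ᶠ (p : ↥dihedralD4 × ↥dihedralD4) (_ : p.2 * p.1 * p.2⁻¹ = p.1 ^ q),
        ((1 : ℚ) / q) ^ dExp (p.1 : Perm (Fin 4)) =
      8 + 8 / (q : ℚ) + 16 / (q : ℚ) ^ 2 + 8 / (q : ℚ) ^ 3 := by
  have hq4 : q % 4 = 1 ∨ q % 4 = 3 := by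
    obtain ⟨k, rfl⟩ := hq; omega
  have hmem : ∀ x : Perm (Fin 4), x ∈ Dfin ↔ x ∈ dihedralD4 := fun x => (mem_dih_iff x).symm
  have hc : ∀ g h : ↥dihedralD4, (h * g * h⁻¹ = g ^ q) =
      ((h : Perm (Fin 4)) * (g : Perm (Fin 4)) * (h : Perm (Fin 4))⁻¹ = (g : Perm (Fin 4)) ^ q) :=
    fun g h => propext (by rw [← Subtype.coe_inj]; push_cast; rfl)
  simp only [finsum_eq_if]
  rw [finsum_eq_sum_of_fintype, Fintype.sum_prod_type]
  simp only [hc]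
  have inner : ∀ g : Perm (Fin 4),
      (∑ h : ↥dihedralD4, if (h : Perm (Fin 4)) * g * (h : Perm (Fin 4))⁻¹ = g ^ q
          then ((1:ℚ)/q) ^ dExp g else 0) =
      ∑ b ∈ Dfin, (if b * g * b⁻¹ = g ^ q then ((1:ℚ)/q) ^ dExp g else 0) :=
    fun g => (Finset.sum_subtype (p := (· ∈ dihedralD4)) Dfin hmem
      (fun b => if b * g * b⁻¹ = g ^ q then ((1:ℚ)/q) ^ dExp g else 0)).symm
  simp only [inner]
  rw [← Finset.sum_subtype Dfin hmem
    (fun a => ∑ b ∈ Dfin, (if b * a * b⁻¹ = a ^ q then ((1:ℚ)/q) ^ dExp a else 0))]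
  simp only [hsum]
  rw [pow_q 1 (by decide) q, pow_q rr (by decide) q, pow_q (rr^2) (by decide) q,
    pow_q (rr^3) (by decide) q, pow_q ss (by decide) q, pow_q (rr*ss) (by decide) q,
    pow_q (rr^2*ss) (by decide) q, pow_q (rr^3*ss) (by decide) q]
  have hqne : (q : ℚ) ≠ 0 := Nat.cast_ne_zero.mpr hq0.ne'
  rcases hq4 with h | h <;> rw [h]
  · simp only [cond0, cond2, cond4, cond6, cond8, cond10, cond12, cond14, cond16, cond18, cond20, cond22, cond24, cond26, cond28, cond30, cond32, cond34, cond36, cond38, cond40, cond42, cond44, cond46, cond48, cond50, cond52, cond54, cond56, cond58, cond60, cond62, cond64, cond66, cond68, cond70, cond72, cond74, cond76, cond78, cond80, cond82, cond84, cond86, cond88, cond90, cond92, cond94, cond96, cond98, cond100, cond102, cond104, cond106, cond108, cond110, cond112, cond114, cond116, cond118, cond120, cond122, cond124, cond126, ite_true, ite_false, dExp_one, dExp_rr, dExp_rr2, dExp_rr3, dExp_ss,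
      dExp_rs, dExp_r2s, dExp_r3s, pow_zero]
    field_simp
    ring
  · simp only [cond1, cond3, cond5, cond7, cond9, cond11, cond13, cond15, cond17, cond19, cond21, cond23, cond25, cond27, cond29, cond31, cond33, cond35, cond37, cond39, cond41, cond43, cond45, cond47, cond49, cond51, cond53, cond55, cond57, cond59, cond61, cond63, cond65, cond67, cond69, cond71, cond73, cond75, cond77, cond79, cond81, cond83, cond85, cond87, cond89, cond91, cond93, cond95, cond97, cond99, cond101, cond103, cond105, cond107, cond109, cond111, cond113, cond115, cond117, cond119, cond121, cond123, cond125, cond127, ite_true, ite_false, dExp_one, dExp_rr, dExp_rr2, dExp_rr3, dExp_ss,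
      dExp_rs, dExp_r2s, dExp_r3s, pow_zero]
    field_simp
    ring
end

section
/- Let D₄ be the subgroup of Perm(Fin 4) generated by the 4-cycle r = (0 1 2 3) and the transposition s = (0 2) (a dihedral group of order 8). Define c : D₄ → ℕ by: c(identity) = 0; c((0 2)) = c((1 3)) = c((0 1)(2 3)) = c((0 3)(1 2)) = 1; c((0 2)(1 3)) = 2; c((0 1 2 3)) = c((0 3 2 1)) = 2. Then for every odd positive integer q, the sum over all pairs (g, h) ∈ D₄ × D₄ with h g h⁻¹ = g^q of (1/q)^{c(g)} (as a rational number) equals 8 + 16/q + 16/q². -/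
open Equiv

/-- The wreath-product counting function on `D₄`: `0` on the identity, `1` on each of the
four reflections `(0 2)`, `(1 3)`, `(0 1)(2 3)`, `(0 3)(1 2)`, and `2` on the remaining
elements `(0 2)(1 3)`, `(0 1 2 3)`, `(0 3 2 1)` of `D₄`. -/
def cWreath (g : Perm (Fin 4)) : ℕ :=
  if g = 1 then 0
  else if g = swap (0 : Fin 4) 2 ∨ g = swap (1 : Fin 4) 3 ∨
      g = swap (0 : Fin 4) 1 * swap (2 : Fin 4) 3 ∨
      g = swap (0 : Fin 4) 3 * swap (1 : Fin 4) 2 then 1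
  else 2

/-- The underlying eight elements of `dihedralD4`, as an explicit finset. -/
def D4set : Finset (Perm (Fin 4)) :=
  {1, c[(0 : Fin 4), 1, 2, 3], (c[(0 : Fin 4), 1, 2, 3]) ^ 2, (c[(0 : Fin 4), 1, 2, 3]) ^ 3,
    swap (0 : Fin 4) 2, swap (1 : Fin 4) 3,
    swap (0 : Fin 4) 1 * swap (2 : Fin 4) 3, swap (0 : Fin 4) 3 * swap (1 : Fin 4) 2}

/-- `D4set` as a subgroup. -/
def D4sub : Subgroup (Perm (Fin 4)) where
  carrier := ↑D4set
  one_mem' := by decide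
  mul_mem' := by decide
  inv_mem' := by decide

lemma memD4sub {g : Perm (Fin 4)} : g ∈ D4sub ↔ g ∈ D4set := Iff.rfl

instance : DecidablePred (· ∈ D4sub) := fun g => decidable_of_iff (g ∈ D4set) memD4sub.symm

lemma dihedral_eq : dihedralD4 = D4sub := by
  apply le_antisymm
  · rw [dihedralD4, Subgroup.closure_le]
    intro x hx
    rcases hx with h | h <;> subst h <;>
      exact SetLike.mem_coe.mpr (memD4sub.mpr (by decide))
  · intro g hg'
    have hg : g ∈ D4set := hg'
    have hr : c[(0 : Fin 4), 1, 2, 3] ∈ dihedralD4 :=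
      Subgroup.subset_closure (by left; rfl)
    have hs : swap (0 : Fin 4) 2 ∈ dihedralD4 :=
      Subgroup.subset_closure (by right; rfl)
    rw [D4set] at hg
    simp only [Finset.mem_insert, Finset.mem_singleton] at hg
    rcases hg with h|h|h|h|h|h|h|h <;> subst h
    · exact one_mem _
    · exact hr
    · exact pow_mem hr 2
    · exact pow_mem hr 3
    · exact hs
    · have : swap (1:Fin 4) 3 = (c[(0 : Fin 4), 1, 2, 3]) ^ 2 * swap (0:Fin 4) 2 := by decide
      rw [this]; exact mul_mem (pow_mem hr 2) hs
    · have : swap (0:Fin 4) 1 * swap (2:Fin 4) 3 =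
        (c[(0 : Fin 4), 1, 2, 3]) ^ 1 * swap (0:Fin 4) 2 ∨
        swap (0:Fin 4) 1 * swap (2:Fin 4) 3 =
        (c[(0 : Fin 4), 1, 2, 3]) ^ 3 * swap (0:Fin 4) 2 := by decide
      rcases this with h | h <;> rw [h] <;> exact mul_mem (pow_mem hr _) hs
    · have : swap (0:Fin 4) 3 * swap (1:Fin 4) 2 =
        (c[(0 : Fin 4), 1, 2, 3]) ^ 1 * swap (0:Fin 4) 2 ∨
        swap (0:Fin 4) 3 * swap (1:Fin 4) 2 =
        (c[(0 : Fin 4), 1, 2, 3]) ^ 3 * swap (0:Fin 4) 2 := by decide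
      rcases this with h | h <;> rw [h] <;> exact mul_mem (pow_mem hr _) hs

/-- For every odd positive integer `q`, the total (tame) mass of `D₄`
with the wreath-product counting function `c` is
`Σ_{(g,h) ∈ D₄², hgh⁻¹ = g^q} (1/q)^{c g} = 8 + 16/q + 16/q²`. -/
theorem d4_mass_wreath (q : ℕ) (hq : Odd q) (hq0 : 0 < q) :
    ∑ᶠ (p : ↥dihedralD4 × ↥dihedralD4) (_ : p.2 * p.1 * p.2⁻¹ = p.1 ^ q),
        ((1 : ℚ) / q) ^ cWreath (p.1 : Perm (Fin 4)) =
      8 + 16 / (q : ℚ) + 16 / (q : ℚ) ^ 2 := by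
  rw [dihedral_eq]
  have h4' : ∀ x ∈ D4set, x ^ (4 : ℕ) = (1 : Perm (Fin 4)) := by
    set_option maxRecDepth 100000 in decide
  have h4 : ∀ g : ↥D4sub, g ^ (4 : ℕ) = 1 := by
    intro g
    apply Subtype.ext
    push_cast
    exact h4' g (memD4sub.mp g.2)
  have hpow : ∀ g : ↥D4sub, g ^ q = g ^ (q % 4) := by
    intro g
    conv_lhs => rw [← Nat.div_add_mod q 4]
    rw [pow_add, pow_mul, h4, one_pow, one_mul]
  have hcond : ∀ p : ↥D4sub × ↥D4sub,
      (p.2 * p.1 * p.2⁻¹ = p.1 ^ q) = (p.2 * p.1 * p.2⁻¹ = p.1 ^ (q % 4)) := by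
    intro p; rw [hpow]
  rw [finsum_eq_sum_of_fintype]
  simp only [finsum_eq_if, hcond]
  rw [Fintype.sum_prod_type]
  have step : ∀ k : ℕ, (∑ g : ↥D4sub, ∑ h : ↥D4sub,
      if h * g * h⁻¹ = g ^ k then ((1 : ℚ) / q) ^ cWreath (g : Perm (Fin 4)) else 0) =
      ∑ g ∈ D4set, ∑ h ∈ D4set,
      if h * g * h⁻¹ = g ^ k then ((1 : ℚ) / q) ^ cWreath g else 0 := by
    intro k
    rw [Finset.sum_subtype D4set (fun x => memD4sub.symm)]
    refine Finset.sum_congr rfl fun g _ => ?_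
    rw [Finset.sum_subtype D4set (fun x => memD4sub.symm)]
    refine Finset.sum_congr rfl fun h _ => ?_
    congr 1
    simp [Subtype.ext_iff]
  rw [step]
  have hqQ : (q : ℚ) ≠ 0 := Nat.cast_ne_zero.mpr hq0.ne'
  have hm : q % 4 = 1 ∨ q % 4 = 3 := by
    obtain ⟨k, hk⟩ := hq; omega
  rcases hm with h | h <;> rw [h] <;>
    · set_option maxRecDepth 100000 in
      simp (config := { decide := true }) [D4set, cWreath, Finset.sum_insert]
      field_simp
      ring
end

section
/- Let A, B, C be groups acting on finite sets 𝓐, 𝓑, 𝓒 respectively. Then there is a group isomorphism Φ : A ≀ (B ≀ C) → (A ≀ B) ≀ C, where B ≀ C is regarded with its natural action on 𝓑 × 𝓒 and A ≀ B with its natural action on 𝓐 × 𝓑, together with a bijection θ : 𝓐 × (𝓑 × 𝓒) → (𝓐 × 𝓑) × 𝓒 (the canonical associativity bijection) which is equivariant: for all w ∈ A ≀ (B ≀ C) and all x ∈ 𝓐 × (𝓑 × 𝓒), θ(w · x) = Φ(w) · θ(x). -/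
/-- The natural imprimitive action of `A ≀ B` on `𝓐 × 𝓑`:
`(f, b) • (a, j) = (f (b • j) • a, b • j)`. -/
instance wreathMulAction {A B 𝓐 𝓑 : Type*} [Group A] [Group B] [MulAction A 𝓐]
    [MulAction B 𝓑] : MulAction (WreathProduct A B 𝓑) (𝓐 × 𝓑) where
  smul w x := (w.left (w.right • x.2) • x.1, w.right • x.2)
  one_smul x := by
    show ((1 : WreathProduct A B 𝓑).left _ • x.1, (1 : WreathProduct A B 𝓑).right • x.2) = x
    simp
  mul_smul w w' x := by
    show ((w * w').left ((w * w').right • x.2) • x.1, (w * w').right • x.2)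
      = (w.left (w.right • (w'.left (w'.right • x.2) • x.1, w'.right • x.2).2) •
          (w'.left (w'.right • x.2) • x.1), w.right • (w'.right • x.2))
    simp [SemidirectProduct.mul_left, SemidirectProduct.mul_right, wreathAut, mul_smul,
      Pi.mul_apply, inv_smul_smul]

lemma wreath_smul_def {A B 𝓐 𝓑 : Type*} [Group A] [Group B] [MulAction A 𝓐]
    [MulAction B 𝓑] (w : WreathProduct A B 𝓑) (x : 𝓐 × 𝓑) :
    w • x = (w.left (w.right • x.2) • x.1, w.right • x.2) := rfl

lemma wreath_inv_smul {A B 𝓐 𝓑 : Type*} [Group A] [Group B] [MulAction A 𝓐]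
    [MulAction B 𝓑] (w : WreathProduct A B 𝓑) (x : 𝓐 × 𝓑) :
    w⁻¹ • x = ((w.left x.2)⁻¹ • x.1, w.right⁻¹ • x.2) := by
  simp [wreath_smul_def, SemidirectProduct.inv_left, SemidirectProduct.inv_right, wreathAut]

/-- Associativity of the wreath product: there is a group isomorphism
`Φ : A ≀ (B ≀ C) ≃* (A ≀ B) ≀ C` which is equivariant for the natural imprimitive
actions with respect to the canonical associativity bijection
`θ : 𝓐 × (𝓑 × 𝓒) ≃ (𝓐 × 𝓑) × 𝓒`. -/
theorem wreathProduct_assoc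
    {A B C 𝓐 𝓑 𝓒 : Type*} [Group A] [Group B] [Group C]
    [MulAction A 𝓐] [MulAction B 𝓑] [MulAction C 𝓒]
    [Finite 𝓐] [Finite 𝓑] [Finite 𝓒] :
    ∃ Φ : WreathProduct A (WreathProduct B C 𝓒) (𝓑 × 𝓒) ≃*
        WreathProduct (WreathProduct A B 𝓑) C 𝓒,
      ∀ (w : WreathProduct A (WreathProduct B C 𝓒) (𝓑 × 𝓒)) (x : 𝓐 × (𝓑 × 𝓒)),
        (Equiv.prodAssoc 𝓐 𝓑 𝓒).symm (w • x) = Φ w • (Equiv.prodAssoc 𝓐 𝓑 𝓒).symm x := by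
  refine ⟨{
    toFun := fun w => ⟨fun k => ⟨fun j => w.left (j, k), w.right.left k⟩, w.right.right⟩
    invFun := fun w => ⟨fun p => (w.left p.2).left p.1, ⟨fun k => (w.left k).right, w.right⟩⟩
    left_inv := fun w => rfl
    right_inv := fun w => rfl
    map_mul' := fun w w' => ?_ }, fun w x => rfl⟩
  ext <;>
    simp [SemidirectProduct.mul_left, SemidirectProduct.mul_right, wreathAut, mul_smul,
      Pi.mul_apply, wreath_inv_smul, -SemidirectProduct.mk_eq_inl_mul_inr] <;> rfl
end
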